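/- arXiv:math-ph/0309016 — 6 statements merged into one kernel-verified Lean document; each statement's English description precedes it below -/
import Mathlib

section
/- Let B ≥ 0, U ≥ 1, P ≥ 0, p > 1, and suppose P U^p a^{p−1} > B where a := ‖f₀‖ > 0. Then the maximal solution of R' = U P R^p − B R, R(0) = U a, exists exactly on [0, t_N) with t_N = (1/(p−1)) L_B(P U^p a^{p−1}), where L_B(u) = −(1/B) log(1 − B/u) for 0 < B < u and L_0(u) = 1/u; R is increasing on [0, t_N) and R(t) → +∞ as t → t_N⁻. -/
open Real Filter Set Topology

noncomputable section

/-- `L_B(u) = −(1/B) log(1 − B/u)` for `0 < B < u`, and `L_0(u) = 1/u`. -/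
def LB (B u : ℝ) : ℝ := if B = 0 then 1 / u else -(1 / B) * Real.log (1 - B / u)

noncomputable def yA (B q UP y0 t : ℝ) : ℝ :=
  if B = 0 then y0 - q * UP * t else UP / B + (y0 - UP / B) * Real.exp (q * B * t)

variable {B q UP y0 : ℝ}

lemma yA_zero : yA B q UP y0 0 = y0 := by
  unfold yA; split <;> simp

lemma yA_hasDerivAt (t : ℝ) :
    HasDerivAt (yA B q UP y0) (q * (B * yA B q UP y0 t - UP)) t := by
  unfold yA
  split
  case isTrue h =>
    subst h
    have : HasDerivAt (fun t : ℝ => y0 - q * UP * t) (-(q * UP)) t := by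
      simpa using ((hasDerivAt_id t).const_mul (q * UP)).const_sub y0
    convert this using 1; ring
  case isFalse h =>
    have : HasDerivAt (fun t : ℝ => UP / B + (y0 - UP / B) * Real.exp (q * B * t))
        ((y0 - UP / B) * (Real.exp (q * B * t) * (q * B))) t := by
      have h1 : HasDerivAt (fun t : ℝ => Real.exp (q * B * t)) (Real.exp (q * B * t) * (q * B)) t := by
        have := (Real.hasDerivAt_exp (q * B * t)).comp t ((hasDerivAt_id t).const_mul (q * B))
        simp only [mul_one] at this; exact this
      simpa using (h1.const_mul (y0 - UP / B)).const_add (UP / B)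
    convert this using 1
    field_simp
    ring

lemma yA_lt (hB : 0 ≤ B) (hUP : 0 < UP) (h0 : B * y0 < UP) (t : ℝ) :
    B * yA B q UP y0 t < UP := by
  unfold yA
  split
  case isTrue h => simpa [h] using hUP
  case isFalse h =>
    have hB' : 0 < B := lt_of_le_of_ne hB (Ne.symm h)
    have he : 0 < Real.exp (q * B * t) := Real.exp_pos _
    have h1 : B * (y0 - UP / B) < 0 := by
      have : B * (y0 - UP / B) = B * y0 - UP := by field_simp
      rw [this]; linarith
    have : B * ((y0 - UP / B) * Real.exp (q * B * t)) < 0 := by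
      rw [← mul_assoc]
      exact mul_neg_of_neg_of_pos h1 he
    have hBUP : B * (UP / B) = UP := by field_simp
    calc B * (UP / B + (y0 - UP / B) * Real.exp (q * B * t))
        = UP + B * ((y0 - UP / B) * Real.exp (q * B * t)) := by rw [mul_add, hBUP]
      _ < UP := by linarith

lemma yA_root (hB : 0 ≤ B) (hq : 0 < q) (hy0 : 0 < y0) (h0 : B * y0 < UP) :
    yA B q UP y0 ((1 / q) * LB B (UP / y0)) = 0 := by
  have hUP : 0 < UP := lt_of_le_of_lt (by positivity) h0
  unfold yA LB
  split
  case isTrue h =>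
    field_simp
    ring
  case isFalse h =>
    have hB' : 0 < B := lt_of_le_of_ne hB (Ne.symm h)
    have hr : (0:ℝ) < 1 - B / (UP / y0) := by
      have : B / (UP / y0) = B * y0 / UP := by field_simp
      rw [this]
      have : B * y0 / UP < 1 := (div_lt_one hUP).2 h0
      linarith
    have hexp : Real.exp (q * B * (1 / q * (-(1 / B) * Real.log (1 - B / (UP / y0)))))
        = (1 - B / (UP / y0))⁻¹ := by
      rw [show q * B * (1 / q * (-(1 / B) * Real.log (1 - B / (UP / y0))))
          = -Real.log (1 - B / (UP / y0)) by field_simp]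
      rw [Real.exp_neg, Real.exp_log hr]
    rw [hexp]
    have h1 : 1 - B / (UP / y0) = (UP - B * y0) / UP := by field_simp
    rw [h1]
    have h2 : UP - B * y0 ≠ 0 := by linarith
    field_simp
    ring

lemma LB_pos {B c : ℝ} (hB : 0 ≤ B) (hc : B < c) (hc0 : 0 < c) : 0 < LB B c := by
  unfold LB
  split
  case isTrue h => positivity
  case isFalse h =>
    have hB' : 0 < B := lt_of_le_of_ne hB (Ne.symm h)
    have h1 : 0 < 1 - B / c := by
      have : B / c < 1 := (div_lt_one hc0).2 hc
      linarith
    have h2 : 1 - B / c < 1 := by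
      have : 0 < B / c := by positivity
      linarith
    have := Real.log_neg h1 h2
    have hB1 : 0 < 1 / B := by positivity
    nlinarith

/-- If `P U^p a^{p−1} > B` (with `a = ‖f₀‖ > 0`), the maximal solution of
`R' = U P R^p − B R`, `R(0) = U a`, exists exactly on `[0, t_N)` with
`t_N = (1/(p−1)) L_B(P U^p a^{p−1})`; it is increasing and blows up at `t_N`. -/
theorem stmt_8 (B U P p a : ℝ) (hB : 0 ≤ B) (hU : 1 ≤ U) (hP : 0 ≤ P)
    (hp : 1 < p) (ha : 0 < a)
    (hsup : B < P * U ^ p * a ^ (p - 1)) :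
    ∃ R : ℝ → ℝ,
      let tN : ℝ := (1 / (p - 1)) * LB B (P * U ^ p * a ^ (p - 1))
      R 0 = U * a ∧
      (∀ t ∈ Ico (0 : ℝ) tN, HasDerivAt R (U * P * R t ^ p - B * R t) t) ∧
      StrictMonoOn R (Ico (0 : ℝ) tN) ∧
      Tendsto R (nhdsWithin tN (Iio tN)) atTop ∧
      -- maximality: no solution exists beyond `t_N`
      (∀ θ : ℝ, ∀ R' : ℝ → ℝ, R' 0 = U * a →
        (∀ t ∈ Ico (0 : ℝ) θ, HasDerivAt R' (U * P * R' t ^ p - B * R' t) t) →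
        θ ≤ tN) := by
  have hU0 : (0:ℝ) < U := lt_of_lt_of_le one_pos hU
  have hUa : 0 < U * a := mul_pos hU0 ha
  set q : ℝ := p - 1 with hqdef
  have hq : 0 < q := by simp only [hqdef]; linarith
  set c : ℝ := P * U ^ p * a ^ (p - 1) with hcdef
  have hc0 : 0 < c := lt_of_le_of_lt hB hsup
  set y0 : ℝ := (U * a) ^ (-q) with hy0def
  have hy0 : 0 < y0 := Real.rpow_pos_of_pos hUa _
  -- key identity : U * P = c * y0
  have hUP : U * P = c * y0 := by
    rw [hcdef, hy0def, Real.mul_rpow hU0.le ha.le]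
    rw [show P * U ^ p * a ^ (p - 1) * (U ^ (-q) * a ^ (-q))
        = P * (U ^ p * U ^ (-q)) * (a ^ (p-1) * a ^ (-q)) by ring]
    rw [← Real.rpow_add hU0, ← Real.rpow_add ha]
    rw [show p + -q = 1 by rw [hqdef]; ring, show p - 1 + -q = 0 by rw [hqdef]; ring]
    simp [mul_comm]
  have hUP0 : 0 < U * P := by rw [hUP]; positivity
  have hBy0 : B * y0 < U * P := by
    rw [hUP]
    exact mul_lt_mul_of_pos_right hsup hy0
  have hcy0 : U * P / y0 = c := by
    rw [hUP]; field_simp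
  set y : ℝ → ℝ := yA B q (U * P) y0 with hydef
  set tN : ℝ := (1 / q) * LB B c with htNdef
  have htN0 : 0 < tN := by
    rw [htNdef]
    have := LB_pos hB hsup hc0
    positivity
  have hy_deriv : ∀ t, HasDerivAt y (q * (B * y t - U * P)) t := fun t => yA_hasDerivAt t
  have hy_lt : ∀ t, B * y t < U * P := fun t => yA_lt hB hUP0 hBy0 t
  have hy_zero : y 0 = y0 := yA_zero
  have hroot : y tN = 0 := by
    rw [htNdef, ← hcy0]
    exact yA_root hB hq hy0 hBy0
  have hy_anti : StrictAnti y := by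
    apply strictAnti_of_deriv_neg
    intro t
    rw [(hy_deriv t).deriv]
    have := hy_lt t
    have : B * y t - U * P < 0 := by linarith
    exact mul_neg_of_pos_of_neg hq this
  have hypos : ∀ t, t < tN → 0 < y t := by
    intro t ht
    have := hy_anti ht
    rw [hroot] at this
    exact this
  set e : ℝ := -(1 / q) with hedef
  have he_neg : e < 0 := by rw [hedef]; simp; positivity
  have hqe : q * e = -1 := by rw [hedef]; field_simp
  have hep : e * p = e - 1 := by
    rw [hedef, hqdef]; field_simp [show p - 1 ≠ 0 by linarith]; ring
  set R : ℝ → ℝ := fun t => y t ^ e with hRdef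
  have hR0 : R 0 = U * a := by
    rw [hRdef]
    simp only
    rw [hy_zero, hy0def, ← Real.rpow_mul hUa.le,
      show (-q) * e = 1 by rw [hedef]; field_simp, Real.rpow_one]
  have hyne : ∀ t, t < tN → y t ≠ 0 := fun t ht => (hypos t ht).ne'
  have hR_deriv_raw : ∀ t, t < tN →
      HasDerivAt R ((q * (B * y t - U * P)) * e * y t ^ (e - 1)) t :=
    fun t ht => (hy_deriv t).rpow_const (Or.inl (hyne t ht))
  have hR_eq : ∀ t, t < tN →
      (q * (B * y t - U * P)) * e * y t ^ (e - 1) = U * P * R t ^ p - B * R t := by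
    intro t ht
    have hyt := hypos t ht
    have h1 : R t ^ p = y t ^ (e - 1) := by
      rw [hRdef]; simp only
      rw [← Real.rpow_mul hyt.le, hep]
    have h2 : R t = y t ^ (e - 1) * y t := by
      rw [hRdef]; simp only
      nth_rewrite 3 [← Real.rpow_one (y t)]
      rw [← Real.rpow_add hyt, show e - 1 + 1 = e by ring]
    rw [h1, h2]
    linear_combination ((B * y t - U * P) * y t ^ (e - 1)) * hqe
  have hR_deriv : ∀ t, t < tN → HasDerivAt R (U * P * R t ^ p - B * R t) t :=
    fun t ht => (hR_eq t ht) ▸ hR_deriv_raw t ht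
  have hR_deriv_pos : ∀ t, t < tN → 0 < (q * (B * y t - U * P)) * e * y t ^ (e - 1) := by
    intro t ht
    have h1 : q * (B * y t - U * P) < 0 :=
      mul_neg_of_pos_of_neg hq (by have := hy_lt t; linarith)
    have h2 : 0 < (q * (B * y t - U * P)) * e := mul_pos_of_neg_of_neg h1 he_neg
    exact mul_pos h2 (Real.rpow_pos_of_pos (hypos t ht) _)
  have hSM : StrictMonoOn R (Ico (0 : ℝ) tN) := by
    apply strictMonoOn_of_deriv_pos (convex_Ico 0 tN)
    · intro t ht
      exact (hR_deriv t ht.2).continuousAt.continuousWithinAt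
    · intro t ht
      rw [interior_Ico] at ht
      rw [(hR_deriv_raw t ht.2).deriv]
      exact hR_deriv_pos t ht.2
  have hy_tend : Tendsto y (𝓝[<] tN) (𝓝[>] (0:ℝ)) := by
    refine tendsto_nhdsWithin_of_tendsto_nhds_of_eventually_within _ ?_ ?_
    · have h1 := (hy_deriv tN).continuousAt.tendsto
      rw [hroot] at h1
      exact h1.mono_left nhdsWithin_le_nhds
    · exact eventually_nhdsWithin_of_forall fun x hx => hypos x hx
  have hpow : Tendsto (fun x : ℝ => x ^ e) (𝓝[>] (0:ℝ)) atTop := by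
    have h1 : Tendsto (fun x : ℝ => x ^ (-e)) (𝓝[>] (0:ℝ)) (𝓝[>] (0:ℝ)) := by
      refine tendsto_nhdsWithin_of_tendsto_nhds_of_eventually_within _ ?_ ?_
      · have hc := (Real.continuousAt_rpow_const 0 (-e) (Or.inr (by linarith))).tendsto
        rw [Real.zero_rpow (by linarith : -e ≠ 0)] at hc
        exact hc.mono_left nhdsWithin_le_nhds
      · exact eventually_nhdsWithin_of_forall fun x hx => Real.rpow_pos_of_pos hx _
    have h2 := tendsto_inv_nhdsGT_zero.comp h1
    apply h2.congr'
    filter_upwards [self_mem_nhdsWithin] with x hx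
    simp only [Function.comp]
    rw [Real.rpow_neg (le_of_lt hx), inv_inv]
  have hTend : Tendsto R (𝓝[<] tN) atTop := hpow.comp hy_tend
  -- maximality
  have hMax : ∀ θ : ℝ, ∀ S : ℝ → ℝ, S 0 = U * a →
      (∀ t ∈ Ico (0 : ℝ) θ, HasDerivAt S (U * P * S t ^ p - B * S t) t) →
      θ ≤ tN := by
    intro θ S hS0 hSd
    by_contra hcon
    push_neg at hcon
    have hScont : ∀ t ∈ Ico (0:ℝ) θ, ContinuousAt S t := fun t ht => (hSd t ht).continuousAt
    have hsub : Icc (0:ℝ) tN ⊆ Ico 0 θ := fun t ht => ⟨ht.1, lt_of_le_of_lt ht.2 hcon⟩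
    have hSpos : ∀ t ∈ Icc (0:ℝ) tN, 0 < S t := by
      by_contra hneg
      push_neg at hneg
      obtain ⟨t0, ht0, hSt0⟩ := hneg
      set Z : Set ℝ := Icc (0:ℝ) tN ∩ S ⁻¹' (Iic 0) with hZdef
      have hZne : Z.Nonempty := ⟨t0, ht0, hSt0⟩
      have hZclosed : IsClosed Z := by
        have hScont' : ContinuousOn S (Icc (0:ℝ) tN) :=
          fun t ht => (hScont t (hsub ht)).continuousWithinAt
        exact hScont'.preimage_isClosed_of_isClosed isClosed_Icc isClosed_Iic
      have hZbdd : BddBelow Z := ⟨0, fun t ht => ht.1.1⟩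
      set τ := sInf Z with hτdef
      have hτZ : τ ∈ Z := hZclosed.csInf_mem hZne hZbdd
      have hτmem : τ ∈ Icc (0:ℝ) tN := hτZ.1
      have hτle : S τ ≤ 0 := hτZ.2
      have hτpos' : ∀ s, 0 ≤ s → s < τ → 0 < S s := by
        intro s hs0 hsτ
        by_contra hs
        push_neg at hs
        have hsZ : s ∈ Z := ⟨⟨hs0, le_trans hsτ.le hτmem.2⟩, hs⟩
        exact absurd (csInf_le hZbdd hsZ) (not_le.2 hsτ)
      have hτ0 : 0 < τ := by
        rcases lt_or_eq_of_le hτmem.1 with h | h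
        · exact h
        · exfalso; rw [← h, hS0] at hτle; linarith
      have hSτ : S τ = 0 := by
        refine le_antisymm hτle ?_
        have htd : Tendsto S (𝓝[<] τ) (𝓝 (S τ)) :=
          ((hScont τ (hsub hτmem)).tendsto).mono_left nhdsWithin_le_nhds
        refine ge_of_tendsto htd ?_
        have h1 : ∀ᶠ x in 𝓝[<] τ, 0 < x :=
          (eventually_gt_nhds hτ0).filter_mono nhdsWithin_le_nhds
        filter_upwards [h1, self_mem_nhdsWithin] with x hx1 hx2
        exact (hτpos' x hx1.le hx2).le
      have hSnonneg : ∀ t ∈ Icc (0:ℝ) τ, 0 ≤ S t := by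
        intro s hs
        rcases lt_or_eq_of_le hs.2 with h | h
        · exact (hτpos' s hs.1 h).le
        · rw [h, hSτ]
      set g : ℝ → ℝ := fun t => S t * Real.exp (B * t) with hgdef
      have hgderiv : ∀ t ∈ Icc (0:ℝ) τ,
          HasDerivAt g (U * P * S t ^ p * Real.exp (B * t)) t := by
        intro t ht
        have htm : t ∈ Ico (0:ℝ) θ := hsub ⟨ht.1, le_trans ht.2 hτmem.2⟩
        have h1 := hSd t htm
        have h2 : HasDerivAt (fun t => Real.exp (B * t)) (Real.exp (B * t) * B) t := by
          have := (Real.hasDerivAt_exp (B * t)).comp t ((hasDerivAt_id t).const_mul B)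
          simp only [mul_one] at this; exact this
        have h3 := h1.mul h2
        exact h3.congr_deriv (by ring)
      have hgmono : MonotoneOn g (Icc (0:ℝ) τ) := by
        apply monotoneOn_of_deriv_nonneg (convex_Icc _ _)
        · intro t ht; exact (hgderiv t ht).continuousAt.continuousWithinAt
        · intro t ht
          rw [interior_Icc] at ht
          exact ((hgderiv t (Ioo_subset_Icc_self ht)).differentiableAt).differentiableWithinAt
        · intro t ht
          rw [interior_Icc] at ht
          rw [(hgderiv t (Ioo_subset_Icc_self ht)).deriv]
          have h4 : 0 ≤ S t ^ p := Real.rpow_nonneg (hSnonneg t (Ioo_subset_Icc_self ht)) p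
          have h5 : 0 < Real.exp (B * t) := Real.exp_pos _
          positivity
      have h01 : g 0 ≤ g τ := hgmono ⟨le_refl 0, hτ0.le⟩ ⟨hτ0.le, le_refl τ⟩ hτ0.le
      rw [hgdef] at h01
      simp only [hS0, hSτ, mul_zero, Real.exp_zero, mul_one, zero_mul] at h01
      linarith
    -- Bernoulli substitution w = S ^ (-q) satisfies the linear ODE of y
    set w : ℝ → ℝ := fun t => S t ^ (-q) with hwdef
    have hw_deriv : ∀ t ∈ Icc (0:ℝ) tN, HasDerivAt w (q * (B * w t - U * P)) t := by
      intro t ht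
      have hSt := hSpos t ht
      have h1 := (hSd t (hsub ht)).rpow_const (p := -q) (Or.inl hSt.ne')
      convert h1 using 1
      have e1 : S t ^ p * S t ^ (-q - 1) = 1 := by
        rw [← Real.rpow_add hSt, show p + (-q - 1) = 0 by rw [hqdef]; ring, Real.rpow_zero]
      have e2 : S t * S t ^ (-q - 1) = S t ^ (-q) := by
        nth_rewrite 1 [← Real.rpow_one (S t)]
        rw [← Real.rpow_add hSt, show 1 + (-q - 1) = -q by ring]
      rw [hwdef]
      simp only
      rw [show (U * P * S t ^ p - B * S t) * (-q) * S t ^ (-q - 1)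
          = -q * (U * P) * (S t ^ p * S t ^ (-q - 1)) + q * B * (S t * S t ^ (-q - 1)) by ring,
        e1, e2]
      ring
    have hw0 : w 0 = y0 := by
      rw [hwdef]; simp only; rw [hS0, hy0def]
    set E : ℝ → ℝ := fun t => Real.exp (-(q * B) * t) with hEdef
    have hE_deriv : ∀ t, HasDerivAt E (-(q * B) * E t) t := by
      intro t
      have h1 : HasDerivAt (fun s : ℝ => Real.exp (-(q * B) * s))
          (Real.exp (-(q * B) * t) * (-(q * B))) t := by
        have := (Real.hasDerivAt_exp (-(q * B) * t)).comp t
          ((hasDerivAt_id t).const_mul (-(q * B)))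
        simp only [Function.comp_def] at this
        exact this.congr_deriv (by simp)
      rw [hEdef]
      simp only
      convert h1 using 1
      ring
    set z : ℝ → ℝ := fun t => (w t - y t) * E t with hzdef
    have hz_deriv : ∀ t ∈ Icc (0:ℝ) tN, HasDerivAt z 0 t := by
      intro t ht
      have h1 := ((hw_deriv t ht).sub (hy_deriv t)).mul (hE_deriv t)
      exact h1.congr_deriv (by simp only [Pi.sub_apply]; ring)
    have hzc : ∀ x ∈ Icc (0:ℝ) tN, z x = z 0 :=
      constant_of_has_deriv_right_zero
        (fun t ht => (hz_deriv t ht).continuousAt.continuousWithinAt)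
        (fun t ht => (hz_deriv t (Ico_subset_Icc_self ht)).hasDerivWithinAt)
    have hz0 : z 0 = 0 := by
      rw [hzdef]; simp only; rw [hw0, hy_zero]; simp
    have hztN : z tN = 0 := by rw [hzc tN ⟨htN0.le, le_refl _⟩, hz0]
    have hEne : E tN ≠ 0 := (Real.exp_pos _).ne'
    have hwy : w tN - y tN = 0 := by
      rcases mul_eq_zero.1 hztN with h | h
      · exact h
      · exact absurd h hEne
    rw [hroot, sub_zero] at hwy
    have hwpos : 0 < w tN := Real.rpow_pos_of_pos (hSpos tN ⟨htN0.le, le_refl _⟩) _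
    rw [hwy] at hwpos
    exact lt_irrefl 0 hwpos
  exact ⟨R, hR0, fun t ht => hR_deriv t ht.2, hSM, hTend, hMax⟩


end
end

section
/- Let F be a Banach space, 𝒰 a strongly continuous linear semigroup on F with estimator u (i.e. ‖𝒰(t)f‖ ≤ u(t)‖f‖, u continuous), and P : Dom P ⊆ F × ℝ → F continuous and Lipschitz at fixed time on strict subsets of its open domain. If φ : [t₀,t₁] → F and φ' : [t₀,t₁'] → F both satisfy the Volterra equation ψ(t) = 𝒰(t−t₀)f₀ + ∫_{t₀}^t 𝒰(t−s)P(ψ(s),s) ds with graphs contained in Dom P, then φ(t) = φ'(t) for all t in the intersection of their domains. -/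
open MeasureTheory Set Bornology Filter Topology

lemma Ucont_aux {F : Type*} [NormedAddCommGroup F] [NormedSpace ℝ F]
    (𝒰 : ℝ → F →L[ℝ] F)
    (h𝒰c : ∀ f : F, ContinuousOn (fun t => 𝒰 t f) (Ici (0 : ℝ)))
    (u : ℝ → ℝ) (hu_cont : ContinuousOn u (Ici (0 : ℝ)))
    (hu : ∀ t : ℝ, 0 ≤ t → ∀ f : F, ‖𝒰 t f‖ ≤ u t * ‖f‖)
    (v : ℝ → F) (a t : ℝ) (hv : ContinuousOn v (Icc a t)) :
    ContinuousOn (fun s => 𝒰 (t - s) (v s)) (Icc a t) := by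
  intro s₀ hs₀
  have hmaps : MapsTo (fun s => t - s) (Icc a t) (Ici (0 : ℝ)) := fun s hs => by
    simp only [mem_Ici, sub_nonneg]; exact hs.2
  have cw : ContinuousWithinAt (fun s => t - s) (Icc a t) s₀ :=
    (continuous_const.sub continuous_id).continuousWithinAt
  have h1 : ContinuousWithinAt (fun s => 𝒰 (t - s) (v s₀)) (Icc a t) s₀ :=
    (h𝒰c (v s₀) _ (hmaps hs₀)).comp cw hmaps
  have hvsub : Tendsto (fun s => v s - v s₀) (𝓝[Icc a t] s₀) (𝓝 0) := by
    have : ContinuousWithinAt (fun s => v s - v s₀) (Icc a t) s₀ :=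
      (hv s₀ hs₀).sub continuousWithinAt_const
    simpa [ContinuousWithinAt] using this
  have hup : Tendsto (fun s => u (t - s) * ‖v s - v s₀‖) (𝓝[Icc a t] s₀) (𝓝 0) := by
    have h2 : ContinuousWithinAt (fun s => u (t - s)) (Icc a t) s₀ :=
      (hu_cont _ (hmaps hs₀)).comp cw hmaps
    have := h2.tendsto.mul (tendsto_norm_zero.comp hvsub)
    simpa using this
  have h2 : Tendsto (fun s => 𝒰 (t - s) (v s - v s₀)) (𝓝[Icc a t] s₀) (𝓝 0) := by
    rw [tendsto_zero_iff_norm_tendsto_zero]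
    refine squeeze_zero' (Eventually.of_forall fun s => norm_nonneg _) ?_ hup
    filter_upwards [self_mem_nhdsWithin] with s hs
    exact hu (t - s) (by simpa only [sub_nonneg] using hs.2) _
  have := h2.add h1.tendsto
  rw [zero_add] at this
  refine Tendsto.congr (fun s => ?_) this
  simp [map_sub]

/-- Uniqueness for the Volterra equation `ψ(t) = 𝒰(t−t₀)f₀ + ∫_{t₀}^t 𝒰(t−s)P(ψ(s),s) ds`,
for a strongly continuous semigroup `𝒰` with estimator `u` and a nonlinearity `P` that is
continuous and Lipschitz at fixed time on the strict subsets of its open domain. -/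
theorem stmt_9
    {F : Type*} [NormedAddCommGroup F] [NormedSpace ℝ F] [CompleteSpace F]
    (𝒰 : ℝ → F →L[ℝ] F)
    (h𝒰sg : ∀ s t : ℝ, 0 ≤ s → 0 ≤ t → 𝒰 (s + t) = (𝒰 s).comp (𝒰 t))
    (h𝒰0 : 𝒰 0 = ContinuousLinearMap.id ℝ F)
    (h𝒰c : ∀ f : F, ContinuousOn (fun t => 𝒰 t f) (Ici (0 : ℝ)))
    (u : ℝ → ℝ) (hu_cont : ContinuousOn u (Ici (0 : ℝ)))
    (hu : ∀ t : ℝ, 0 ≤ t → ∀ f : F, ‖𝒰 t f‖ ≤ u t * ‖f‖)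
    (P : F → ℝ → F) (D : Set (F × ℝ)) (hD : IsOpen D)
    (hPc : ContinuousOn (fun q : F × ℝ => P q.1 q.2) D)
    (hPlip : ∀ C : Set (F × ℝ), IsBounded C → closure C ⊆ D →
      ∃ L : ℝ, 0 ≤ L ∧ ∀ (f f' : F) (t : ℝ), (f, t) ∈ C → (f', t) ∈ C →
        ‖P f t - P f' t‖ ≤ L * ‖f - f'‖)
    (f₀ : F) (t₀ t₁ t₁' : ℝ) (h01 : t₀ < t₁) (h01' : t₀ < t₁')
    (φ φ' : ℝ → F)
    (hφc : ContinuousOn φ (Icc t₀ t₁)) (hφ'c : ContinuousOn φ' (Icc t₀ t₁'))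
    (hφD : ∀ t ∈ Icc t₀ t₁, (φ t, t) ∈ D)
    (hφ'D : ∀ t ∈ Icc t₀ t₁', (φ' t, t) ∈ D)
    (hφ : ∀ t ∈ Icc t₀ t₁,
      φ t = 𝒰 (t - t₀) f₀ + ∫ s in t₀..t, 𝒰 (t - s) (P (φ s) s))
    (hφ' : ∀ t ∈ Icc t₀ t₁',
      φ' t = 𝒰 (t - t₀) f₀ + ∫ s in t₀..t, 𝒰 (t - s) (P (φ' s) s)) :
    ∀ t ∈ Icc t₀ t₁ ∩ Icc t₀ t₁', φ t = φ' t := by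
  set T := min t₁ t₁' with hTdef
  have hT0 : t₀ < T := lt_min h01 h01'
  have hTT : t₀ ≤ T := hT0.le
  have hsub1 : Icc t₀ T ⊆ Icc t₀ t₁ := Icc_subset_Icc_right (min_le_left _ _)
  have hsub2 : Icc t₀ T ⊆ Icc t₀ t₁' := Icc_subset_Icc_right (min_le_right _ _)
  -- the compact set C containing both graphs
  have hc1 : ContinuousOn (fun s => (φ s, s)) (Icc t₀ T) :=
    (hφc.mono hsub1).prodMk continuousOn_id
  have hc2 : ContinuousOn (fun s => (φ' s, s)) (Icc t₀ T) :=
    (hφ'c.mono hsub2).prodMk continuousOn_id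
  set C : Set (F × ℝ) :=
    (fun s => (φ s, s)) '' Icc t₀ T ∪ (fun s => (φ' s, s)) '' Icc t₀ T with hCdef
  have hCcomp : IsCompact C :=
    (isCompact_Icc.image_of_continuousOn hc1).union (isCompact_Icc.image_of_continuousOn hc2)
  have hCD : C ⊆ D := by
    rintro q (⟨s, hs, rfl⟩ | ⟨s, hs, rfl⟩)
    · exact hφD s (hsub1 hs)
    · exact hφ'D s (hsub2 hs)
  obtain ⟨L, hL0, hLip⟩ := hPlip C hCcomp.isBounded
    (by rw [hCcomp.isClosed.closure_eq]; exact hCD)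
  -- bound for u on [0, T - t₀]
  obtain ⟨M, hM⟩ := (isCompact_Icc (a := (0:ℝ)) (b := T - t₀)).exists_bound_of_continuousOn
    (hu_cont.mono (fun x hx => hx.1))
  set M₀ : ℝ := max M 0 with hM₀def
  have hM₀ : (0:ℝ) ≤ M₀ := le_max_right _ _
  have huM : ∀ r ∈ Icc (0:ℝ) (T - t₀), u r ≤ M₀ := fun r hr =>
    (le_abs_self _).trans (((Real.norm_eq_abs _) ▸ hM r hr).trans (le_max_left _ _))
  set K : ℝ := M₀ * L with hKdef
  have hK0 : (0:ℝ) ≤ K := mul_nonneg hM₀ hL0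
  -- continuity of the nonlinearities along the solutions
  have hvφ : ContinuousOn (fun s => P (φ s) s) (Icc t₀ T) :=
    hPc.comp hc1 (fun s hs => hφD s (hsub1 hs))
  have hvφ' : ContinuousOn (fun s => P (φ' s) s) (Icc t₀ T) :=
    hPc.comp hc2 (fun s hs => hφ'D s (hsub2 hs))
  -- the key integral estimate
  have key : ∀ t ∈ Icc t₀ T, ‖φ t - φ' t‖ ≤ ∫ s in t₀..t, K * ‖φ s - φ' s‖ := by
    intro t ht
    have htt : t₀ ≤ t := ht.1
    have hsubt : Icc t₀ t ⊆ Icc t₀ T := Icc_subset_Icc_right ht.2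
    have cont1 : ContinuousOn (fun s => 𝒰 (t - s) (P (φ s) s)) (Icc t₀ t) :=
      Ucont_aux 𝒰 h𝒰c u hu_cont hu _ t₀ t (hvφ.mono hsubt)
    have cont2 : ContinuousOn (fun s => 𝒰 (t - s) (P (φ' s) s)) (Icc t₀ t) :=
      Ucont_aux 𝒰 h𝒰c u hu_cont hu _ t₀ t (hvφ'.mono hsubt)
    have int1 : IntervalIntegrable (fun s => 𝒰 (t - s) (P (φ s) s)) volume t₀ t :=
      ContinuousOn.intervalIntegrable (by rwa [uIcc_of_le htt])
    have int2 : IntervalIntegrable (fun s => 𝒰 (t - s) (P (φ' s) s)) volume t₀ t :=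
      ContinuousOn.intervalIntegrable (by rwa [uIcc_of_le htt])
    have eq : φ t - φ' t = ∫ s in t₀..t, 𝒰 (t - s) (P (φ s) s - P (φ' s) s) := by
      rw [hφ t (hsub1 ht), hφ' t (hsub2 ht), add_sub_add_left_eq_sub,
        ← intervalIntegral.integral_sub int1 int2]
      exact intervalIntegral.integral_congr fun s hs => by simp [map_sub]
    have contd : ContinuousOn (fun s => 𝒰 (t - s) (P (φ s) s - P (φ' s) s)) (Icc t₀ t) := by
      have : ContinuousOn (fun s => P (φ s) s - P (φ' s) s) (Icc t₀ t) :=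
        (hvφ.mono hsubt).sub (hvφ'.mono hsubt)
      exact Ucont_aux 𝒰 h𝒰c u hu_cont hu _ t₀ t this
    have intn : IntervalIntegrable (fun s => ‖𝒰 (t - s) (P (φ s) s - P (φ' s) s)‖) volume t₀ t :=
      ContinuousOn.intervalIntegrable (by rw [uIcc_of_le htt]; exact contd.norm)
    have intK : IntervalIntegrable (fun s => K * ‖φ s - φ' s‖) volume t₀ t := by
      refine ContinuousOn.intervalIntegrable ?_
      rw [uIcc_of_le htt]
      exact continuousOn_const.mul
        (((hφc.mono (hsubt.trans hsub1)).sub (hφ'c.mono (hsubt.trans hsub2))).norm)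
    calc ‖φ t - φ' t‖
        = ‖∫ s in t₀..t, 𝒰 (t - s) (P (φ s) s - P (φ' s) s)‖ := by rw [eq]
      _ ≤ ∫ s in t₀..t, ‖𝒰 (t - s) (P (φ s) s - P (φ' s) s)‖ :=
          intervalIntegral.norm_integral_le_integral_norm htt
      _ ≤ ∫ s in t₀..t, K * ‖φ s - φ' s‖ := by
          refine intervalIntegral.integral_mono_on htt intn intK fun s hs => ?_
          have hts : 0 ≤ t - s := sub_nonneg.2 hs.2
          have htsT : t - s ∈ Icc (0:ℝ) (T - t₀) :=
            ⟨hts, sub_le_sub ht.2 hs.1⟩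
          have m1 : (φ s, s) ∈ C := Or.inl ⟨s, hsubt hs, rfl⟩
          have m2 : (φ' s, s) ∈ C := Or.inr ⟨s, hsubt hs, rfl⟩
          calc ‖𝒰 (t - s) (P (φ s) s - P (φ' s) s)‖
              ≤ u (t - s) * ‖P (φ s) s - P (φ' s) s‖ := hu _ hts _
            _ ≤ M₀ * ‖P (φ s) s - P (φ' s) s‖ :=
                mul_le_mul_of_nonneg_right (huM _ htsT) (norm_nonneg _)
            _ ≤ M₀ * (L * ‖φ s - φ' s‖) :=
                mul_le_mul_of_nonneg_left (hLip _ _ _ m1 m2) hM₀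
            _ = K * ‖φ s - φ' s‖ := by rw [hKdef, mul_assoc]
  -- Gronwall argument, using a truncated version of the difference
  set ψ : ℝ → ℝ := fun s => min s T with hψdef
  have hψmaps : MapsTo ψ (Ici t₀) (Icc t₀ T) := fun s hs =>
    ⟨le_min hs hTT, min_le_right _ _⟩
  set g : ℝ → ℝ := fun s => ‖φ (ψ s) - φ' (ψ s)‖ with hgdef
  have hgcont : ContinuousOn g (Ici t₀) := by
    have hψc : Continuous ψ := continuous_id.min continuous_const
    exact (((hφc.mono hsub1).comp hψc.continuousOn hψmaps).sub
      ((hφ'c.mono hsub2).comp hψc.continuousOn hψmaps)).norm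
  have hgT : ∀ s ∈ Icc t₀ T, g s = ‖φ s - φ' s‖ := fun s hs => by
    simp [hgdef, hψdef, min_eq_left hs.2]
  have hg0 : ∀ s, 0 ≤ g s := fun s => norm_nonneg _
  set h : ℝ → ℝ := fun x => ∫ s in t₀..x, g s with hhdef
  have hgint : IntegrableOn g (uIcc t₀ T) volume := by
    rw [uIcc_of_le hTT]
    exact (hgcont.mono fun r hr => hr.1).integrableOn_compact isCompact_Icc
  have hcontOn : ContinuousOn h (Icc t₀ T) := by
    have := intervalIntegral.continuousOn_primitive_interval (a := t₀) (b := T) hgint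
    rwa [uIcc_of_le hTT] at this
  have hderiv : ∀ x ∈ Ico t₀ T, HasDerivWithinAt h (g x) (Ici x) x := by
    intro x hx
    have hint : IntervalIntegrable g volume t₀ x := by
      refine ContinuousOn.intervalIntegrable ?_
      rw [uIcc_of_le hx.1]
      exact hgcont.mono fun r hr => hr.1
    have hsub : Ioi x ⊆ Ici t₀ := fun r hr => hx.1.trans hr.le
    refine intervalIntegral.integral_hasDerivWithinAt_right hint
      ⟨Ioi x, self_mem_nhdsWithin,
        (hgcont.mono hsub).aestronglyMeasurable measurableSet_Ioi⟩ ?_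
    exact (hgcont x hx.1).mono hsub
  have ha : ‖h t₀‖ ≤ 0 := by simp [hhdef]
  have bound : ∀ x ∈ Ico t₀ T, ‖g x‖ ≤ K * ‖h x‖ + 0 := by
    intro x hx
    have hxI : x ∈ Icc t₀ T := ⟨hx.1, hx.2.le⟩
    have h1 : h x = ∫ s in t₀..x, ‖φ s - φ' s‖ := by
      refine intervalIntegral.integral_congr fun s hs => ?_
      rw [uIcc_of_le hx.1] at hs
      exact hgT s ⟨hs.1, hs.2.trans hx.2.le⟩
    have h2 : ‖φ x - φ' x‖ ≤ K * h x := by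
      rw [h1]
      calc ‖φ x - φ' x‖ ≤ ∫ s in t₀..x, K * ‖φ s - φ' s‖ := key x hxI
        _ = K * ∫ s in t₀..x, ‖φ s - φ' s‖ := by
            rw [intervalIntegral.integral_const_mul]
    rw [Real.norm_eq_abs, abs_of_nonneg (hg0 x), hgT x hxI, add_zero]
    exact h2.trans (mul_le_mul_of_nonneg_left (le_abs_self _) hK0)
  have grw := norm_le_gronwallBound_of_norm_deriv_right_le hcontOn hderiv ha bound
  have hz : ∀ t ∈ Icc t₀ T, φ t = φ' t := by
    intro t ht
    have := grw t ht
    rw [gronwallBound_ε0_δ0] at this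
    have hht : h t = 0 := le_antisymm ((le_abs_self _).trans (by rwa [Real.norm_eq_abs] at this))
      (by
        rw [hhdef]
        exact intervalIntegral.integral_nonneg ht.1 fun s _ => hg0 s)
    have h1 : h t = ∫ s in t₀..t, ‖φ s - φ' s‖ := by
      refine intervalIntegral.integral_congr fun s hs => ?_
      rw [uIcc_of_le ht.1] at hs
      exact hgT s ⟨hs.1, hs.2.trans ht.2⟩
    have h2 : ‖φ t - φ' t‖ ≤ 0 := by
      calc ‖φ t - φ' t‖ ≤ ∫ s in t₀..t, K * ‖φ s - φ' s‖ := key t ht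
        _ = K * ∫ s in t₀..t, ‖φ s - φ' s‖ := by rw [intervalIntegral.integral_const_mul]
        _ = K * h t := by rw [h1]
        _ = 0 := by rw [hht, mul_zero]
    have := le_antisymm h2 (norm_nonneg _)
    rw [norm_eq_zero, sub_eq_zero] at this
    exact this
  intro t ht
  exact hz t ⟨ht.1.1, le_min ht.1.2 ht.2.2⟩
end

section
/- Let F be a Banach space, 𝒰 a strongly continuous linear semigroup on F with continuous estimator u, P : Dom P ⊆ F × ℝ → F continuous and Lipschitz at fixed time on strict subsets of its open domain, and (f₀,t₀) ∈ Dom P. Let φ_ap ∈ C([t₀,t₁], F) with graph in Dom P, let ℰ : [t₀,t₁] → [0,∞) be continuous with ‖φ_ap(t) − 𝒰(t−t₀)f₀ − ∫_{t₀}^t 𝒰(t−s)P(φ_ap(s),s) ds‖ ≤ ℰ(t), and let ℓ : [0,ρ) × [t₀,t₁] → [0,∞) be continuous, nondecreasing in its first argument, with the tube {(f,t) : ‖f − φ_ap(t)‖ < ρ} contained in Dom P and ‖P(f,t) − P(φ_ap(t),t)‖ ≤ ℓ(‖f − φ_ap(t)‖, t) on the tube. If R ∈ C([t₀,t₁], [0,ρ))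 satisfies the control inequality ℰ(t) + ∫_{t₀}^t u(t−s) ℓ(R(s), s) ds ≤ R(t) for all t ∈ [t₀,t₁], then the Volterra problem φ(t) = 𝒰(t−t₀)f₀ + ∫_{t₀}^t 𝒰(t−s)P(φ(s),s) ds has a solution φ ∈ C([t₀,t₁], F) with ‖φ(t) − φ_ap(t)‖ ≤ R(t) for all t ∈ [t₀,t₁]. -/
open MeasureTheory Set Bornology
open scoped ENNReal

open Filter Topology in
/-- Joint continuity of `(t, f) ↦ 𝒰 t f` on `Ici 0 × univ`, from strong continuity and the
continuous norm estimator `u`. -/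
lemma aux_Ucont_stmt10 {F : Type*} [NormedAddCommGroup F] [NormedSpace ℝ F]
    (𝒰 : ℝ → F →L[ℝ] F) (u : ℝ → ℝ)
    (hu_cont : ContinuousOn u (Ici (0:ℝ)))
    (hu : ∀ t : ℝ, 0 ≤ t → ∀ f : F, ‖𝒰 t f‖ ≤ u t * ‖f‖)
    (h𝒰c : ∀ f : F, ContinuousOn (fun t => 𝒰 t f) (Ici (0:ℝ))) :
    ContinuousOn (fun p : ℝ × F => 𝒰 p.1 p.2) (Ici (0:ℝ) ×ˢ univ) := by
  rintro ⟨a, f⟩ ⟨ha, -⟩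
  have hfst : Tendsto Prod.fst (𝓝[Ici (0:ℝ) ×ˢ (univ : Set F)] (a, f)) (𝓝[Ici (0:ℝ)] a) :=
    continuousWithinAt_fst.tendsto_nhdsWithin fun p hp => hp.1
  have hucw : Tendsto u (𝓝[Ici (0:ℝ)] a) (𝓝 (u a)) := hu_cont a ha
  have hUcw : Tendsto (fun t => 𝒰 t f) (𝓝[Ici (0:ℝ)] a) (𝓝 (𝒰 a f)) := h𝒰c f a ha
  have h1 : Tendsto (fun p : ℝ × F => u p.1)
      (𝓝[Ici (0:ℝ) ×ˢ (univ : Set F)] (a, f)) (𝓝 (u a)) := hucw.comp hfst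
  have h2 : Tendsto (fun p : ℝ × F => dist p.2 f)
      (𝓝[Ici (0:ℝ) ×ˢ (univ : Set F)] (a, f)) (𝓝 (dist f f)) :=
    ((continuous_snd.tendsto _).dist tendsto_const_nhds).mono_left nhdsWithin_le_nhds
  have h3 : Tendsto (fun p : ℝ × F => dist (𝒰 p.1 f) (𝒰 a f))
      (𝓝[Ici (0:ℝ) ×ˢ (univ : Set F)] (a, f)) (𝓝 (dist (𝒰 a f) (𝒰 a f))) :=
    (hUcw.comp hfst).dist tendsto_const_nhds
  have hb : Tendsto (fun p : ℝ × F => u p.1 * dist p.2 f + dist (𝒰 p.1 f) (𝒰 a f))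
      (𝓝[Ici (0:ℝ) ×ˢ (univ : Set F)] (a, f)) (𝓝 0) := by
    have := (h1.mul h2).add h3
    simpa using this
  rw [ContinuousWithinAt, tendsto_iff_dist_tendsto_zero]
  refine squeeze_zero' (Eventually.of_forall fun p => dist_nonneg) ?_ hb
  filter_upwards [self_mem_nhdsWithin] with p hp
  have ht : (0:ℝ) ≤ p.1 := hp.1
  have key : dist (𝒰 p.1 p.2) (𝒰 p.1 f) ≤ u p.1 * dist p.2 f := by
    rw [dist_eq_norm, dist_eq_norm, ← map_sub]
    exact hu p.1 ht _
  calc dist (𝒰 p.1 p.2) (𝒰 a f)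
      ≤ dist (𝒰 p.1 p.2) (𝒰 p.1 f) + dist (𝒰 p.1 f) (𝒰 a f) := dist_triangle _ _ _
    _ ≤ u p.1 * dist p.2 f + dist (𝒰 p.1 f) (𝒰 a f) := by linarith

/-- Extension of a continuous map on `Icc t₀ t₁` to all of `ℝ` by projection. -/
noncomputable def extIcc {F : Type*} [NormedAddCommGroup F] [NormedSpace ℝ F]
    (t₀ t₁ : ℝ) (h : t₀ ≤ t₁) (ψ : C(Set.Icc t₀ t₁, F)) : ℝ → F :=
  fun s => ψ (Set.projIcc t₀ t₁ h s)

/-- The Picard/Volterra iteration map (as a function of a real time variable). -/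
noncomputable def Tval {F : Type*} [NormedAddCommGroup F] [NormedSpace ℝ F] [CompleteSpace F]
    (𝒰 : ℝ → F →L[ℝ] F) (P : F → ℝ → F) (f₀ : F) (t₀ t₁ : ℝ) (h : t₀ ≤ t₁)
    (ψ : C(Set.Icc t₀ t₁, F)) : ℝ → F :=
  fun t => 𝒰 (t - t₀) f₀ + ∫ s in t₀..t, 𝒰 (t - s) (P (extIcc t₀ t₁ h ψ s) s)

set_option maxHeartbeats 2000000 in
/-- Main theorem: if the control inequality
`ℰ(t) + ∫_{t₀}^t u(t−s) ℓ(R(s),s) ds ≤ R(t)` has a solution `R` on `[t₀,t₁]`, then the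
Volterra problem has a solution `φ` on `[t₀,t₁]` with `‖φ(t) − φ_ap(t)‖ ≤ R(t)`. -/
theorem stmt_10
    {F : Type*} [NormedAddCommGroup F] [NormedSpace ℝ F] [CompleteSpace F]
    (𝒰 : ℝ → F →L[ℝ] F)
    (h𝒰sg : ∀ s t : ℝ, 0 ≤ s → 0 ≤ t → 𝒰 (s + t) = (𝒰 s).comp (𝒰 t))
    (h𝒰0 : 𝒰 0 = ContinuousLinearMap.id ℝ F)
    (h𝒰c : ∀ f : F, ContinuousOn (fun t => 𝒰 t f) (Ici (0 : ℝ)))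
    (u : ℝ → ℝ) (hu_cont : ContinuousOn u (Ici (0 : ℝ)))
    (hu : ∀ t : ℝ, 0 ≤ t → ∀ f : F, ‖𝒰 t f‖ ≤ u t * ‖f‖)
    (P : F → ℝ → F) (D : Set (F × ℝ)) (hD : IsOpen D)
    (hPc : ContinuousOn (fun q : F × ℝ => P q.1 q.2) D)
    (hPlip : ∀ C : Set (F × ℝ), IsBounded C → closure C ⊆ D →
      ∃ L : ℝ, 0 ≤ L ∧ ∀ (f f' : F) (t : ℝ), (f, t) ∈ C → (f', t) ∈ C →
        ‖P f t - P f' t‖ ≤ L * ‖f - f'‖)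
    (f₀ : F) (t₀ t₁ : ℝ) (h01 : t₀ < t₁) (hf₀ : (f₀, t₀) ∈ D)
    -- the approximate solution and its integral error estimator
    (φap : ℝ → F) (hφapc : ContinuousOn φap (Icc t₀ t₁))
    (hφapD : ∀ t ∈ Icc t₀ t₁, (φap t, t) ∈ D)
    (ℰ : ℝ → ℝ) (hℰc : ContinuousOn ℰ (Icc t₀ t₁)) (hℰnn : ∀ t ∈ Icc t₀ t₁, 0 ≤ ℰ t)
    (hℰ : ∀ t ∈ Icc t₀ t₁,
      ‖φap t - 𝒰 (t - t₀) f₀ - ∫ s in t₀..t, 𝒰 (t - s) (P (φap s) s)‖ ≤ ℰ t)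
    -- the growth estimator `ℓ` of `P` from `φap` on the tube of radius `ρ ∈ (0,∞]`
    (ρ : ℝ≥0∞) (hρ : 0 < ρ) (ℓ : ℝ → ℝ → ℝ)
    (hℓc : ContinuousOn (fun q : ℝ × ℝ => ℓ q.1 q.2)
      {q : ℝ × ℝ | 0 ≤ q.1 ∧ ENNReal.ofReal q.1 < ρ ∧ q.2 ∈ Icc t₀ t₁})
    (hℓnn : ∀ r t, 0 ≤ r → ENNReal.ofReal r < ρ → t ∈ Icc t₀ t₁ → 0 ≤ ℓ r t)
    (hℓmono : ∀ t ∈ Icc t₀ t₁, ∀ r r' : ℝ, 0 ≤ r → r ≤ r' → ENNReal.ofReal r' < ρ →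
      ℓ r t ≤ ℓ r' t)
    (htube : ∀ (f : F), ∀ t ∈ Icc t₀ t₁, (‖f - φap t‖₊ : ℝ≥0∞) < ρ →
      (f, t) ∈ D ∧ ‖P f t - P (φap t) t‖ ≤ ℓ (‖f - φap t‖) t)
    -- the control inequality
    (R : ℝ → ℝ) (hRc : ContinuousOn R (Icc t₀ t₁))
    (hRnn : ∀ t ∈ Icc t₀ t₁, 0 ≤ R t) (hRρ : ∀ t ∈ Icc t₀ t₁, ENNReal.ofReal (R t) < ρ)
    (hcontrol : ∀ t ∈ Icc t₀ t₁,
      ℰ t + ∫ s in t₀..t, u (t - s) * ℓ (R s) s ≤ R t) :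
    ∃ φ : ℝ → F, ContinuousOn φ (Icc t₀ t₁) ∧
      (∀ t ∈ Icc t₀ t₁, (φ t, t) ∈ D) ∧
      (∀ t ∈ Icc t₀ t₁,
        φ t = 𝒰 (t - t₀) f₀ + ∫ s in t₀..t, 𝒰 (t - s) (P (φ s) s)) ∧
      (∀ t ∈ Icc t₀ t₁, ‖φ t - φap t‖ ≤ R t) := by
  rcases subsingleton_or_nontrivial F with hFs | hFn
  · refine ⟨φap, hφapc, hφapD, fun t ht => Subsingleton.elim _ _, fun t ht => ?_⟩
    simpa using hRnn t ht
  have ht01 : t₀ ≤ t₁ := h01.le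
  -- `u` is nonnegative on `Ici 0`
  have hu0 : ∀ t : ℝ, 0 ≤ t → 0 ≤ u t := by
    intro t ht
    obtain ⟨f, hf⟩ := exists_ne (0 : F)
    have hfpos : 0 < ‖f‖ := norm_pos_iff.mpr hf
    nlinarith [norm_nonneg (𝒰 t f), hu t ht f]
  have hUc := aux_Ucont_stmt10 𝒰 u hu_cont hu h𝒰c
  -- projection facts
  have hprid : ∀ s (hs : s ∈ Icc t₀ t₁), ((projIcc t₀ t₁ ht01 s : ℝ)) = s := by
    intro s hs; rw [projIcc_of_mem ht01 hs]
  have hExtEq : ∀ (ψ : C(Icc t₀ t₁, F)) (s : ℝ) (hs : s ∈ Icc t₀ t₁),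
      extIcc t₀ t₁ ht01 ψ s = ψ ⟨s, hs⟩ := by
    intro ψ s hs
    simp [extIcc, projIcc_of_mem ht01 hs]
  have hExtCont : ∀ ψ : C(Icc t₀ t₁, F), Continuous (extIcc t₀ t₁ ht01 ψ) := fun ψ =>
    ψ.continuous.comp continuous_projIcc
  -- the invariant set
  set ST : Set C(Icc t₀ t₁, F) :=
    {ψ : C(Icc t₀ t₁, F) | ∀ x : Icc t₀ t₁, ‖ψ x - φap ↑x‖ ≤ R ↑x} with hSTdef
  -- tube facts for members of `ST`
  have htubeS : ∀ ψ : C(Icc t₀ t₁, F), ψ ∈ ST → ∀ s ∈ Icc t₀ t₁,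
      ‖extIcc t₀ t₁ ht01 ψ s - φap s‖ ≤ R s := by
    intro ψ hψ s hs
    rw [hExtEq ψ s hs]
    exact hψ ⟨s, hs⟩
  have hnn : ∀ (f : F) (s : ℝ), s ∈ Icc t₀ t₁ → ‖f - φap s‖ ≤ R s →
      (‖f - φap s‖₊ : ℝ≥0∞) < ρ := by
    intro f s hs h
    calc (‖f - φap s‖₊ : ℝ≥0∞) = ENNReal.ofReal ‖f - φap s‖ :=
          (ofReal_norm_eq_enorm _).symm
      _ ≤ ENNReal.ofReal (R s) := ENNReal.ofReal_le_ofReal h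
      _ < ρ := hRρ s hs
  have htube' : ∀ ψ : C(Icc t₀ t₁, F), ψ ∈ ST → ∀ s ∈ Icc t₀ t₁,
      (extIcc t₀ t₁ ht01 ψ s, s) ∈ D ∧
      ‖P (extIcc t₀ t₁ ht01 ψ s) s - P (φap s) s‖ ≤ ℓ (‖extIcc t₀ t₁ ht01 ψ s - φap s‖) s :=
    fun ψ hψ s hs => htube _ s hs (hnn _ s hs (htubeS ψ hψ s hs))
  -- continuity of `s ↦ P (ext ψ s) s` on `Icc t₀ t₁`
  have hQcont : ∀ ψ : C(Icc t₀ t₁, F), ψ ∈ ST →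
      ContinuousOn (fun s => P (extIcc t₀ t₁ ht01 ψ s) s) (Icc t₀ t₁) := by
    intro ψ hψ
    exact hPc.comp (((hExtCont ψ).continuousOn).prodMk continuousOn_id)
      (fun s hs => (htube' ψ hψ s hs).1)
  have hQapc : ContinuousOn (fun s => P (φap s) s) (Icc t₀ t₁) :=
    hPc.comp (hφapc.prodMk continuousOn_id) (fun s hs => hφapD s hs)
  -- kernel continuity and integrability
  have hKer : ∀ (g : ℝ → F) (t : ℝ), t ∈ Icc t₀ t₁ → ContinuousOn g (Icc t₀ t) →
      ContinuousOn (fun s => 𝒰 (t - s) (g s)) (Icc t₀ t) := by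
    intro g t ht hg
    refine hUc.comp (((continuous_const.sub continuous_id).continuousOn).prodMk hg) ?_
    intro s hs
    exact ⟨sub_nonneg.2 hs.2, mem_univ _⟩
  have hInt : ∀ (g : ℝ → F) (t : ℝ) (ht : t ∈ Icc t₀ t₁), ContinuousOn g (Icc t₀ t) →
      IntervalIntegrable (fun s => 𝒰 (t - s) (g s)) volume t₀ t := by
    intro g t ht hg
    apply ContinuousOn.intervalIntegrable
    rw [uIcc_of_le ht.1]
    exact hKer g t ht hg
  have huker : ∀ t : ℝ, t ∈ Icc t₀ t₁ → ContinuousOn (fun s => u (t - s)) (Icc t₀ t) := by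
    intro t ht
    exact hu_cont.comp ((continuous_const.sub continuous_id).continuousOn)
      (fun s hs => sub_nonneg.2 hs.2)
  have hℓR : ContinuousOn (fun s => ℓ (R s) s) (Icc t₀ t₁) :=
    hℓc.comp (hRc.prodMk continuousOn_id) (fun s hs => ⟨hRnn s hs, hRρ s hs, hs⟩)
  -- the bound `M` on `u`
  obtain ⟨M, hMb⟩ := isCompact_Icc.exists_bound_of_continuousOn
    (hu_cont.mono (fun r (hr : r ∈ Icc (0:ℝ) (t₁ - t₀)) => hr.1))
  have hM0 : 0 ≤ M := (norm_nonneg (u 0)).trans (hMb 0 ⟨le_refl 0, sub_nonneg.2 ht01⟩)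
  have hMle : ∀ r ∈ Icc (0:ℝ) (t₁ - t₀), u r ≤ M := fun r hr =>
    (le_abs_self _).trans (le_of_eq_of_le (Real.norm_eq_abs _).symm (hMb r hr))
  -- the Lipschitz constant `L` on the tube
  set φae : ℝ → F := fun s => φap ((projIcc t₀ t₁ ht01 s : ℝ)) with hφae
  set Re : ℝ → ℝ := fun s => R ((projIcc t₀ t₁ ht01 s : ℝ)) with hRe
  have hφaec : Continuous φae :=
    hφapc.comp_continuous (continuous_subtype_val.comp continuous_projIcc)
      (fun s => (projIcc t₀ t₁ ht01 s).2)
  have hRec : Continuous Re :=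
    hRc.comp_continuous (continuous_subtype_val.comp continuous_projIcc)
      (fun s => (projIcc t₀ t₁ ht01 s).2)
  set Ctube : Set (F × ℝ) := {p : F × ℝ | p.2 ∈ Icc t₀ t₁ ∧ ‖p.1 - φae p.2‖ ≤ Re p.2}
    with hCtube
  have hCclosed : IsClosed Ctube := by
    have h1 : IsClosed {p : F × ℝ | p.2 ∈ Icc t₀ t₁} := isClosed_Icc.preimage continuous_snd
    have h2 : IsClosed {p : F × ℝ | ‖p.1 - φae p.2‖ ≤ Re p.2} :=
      isClosed_le ((continuous_fst.sub (hφaec.comp continuous_snd)).norm)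
        (hRec.comp continuous_snd)
    exact h1.inter h2
  have hCbdd : IsBounded Ctube := by
    obtain ⟨r₁, hr₁⟩ := isCompact_Icc.exists_bound_of_continuousOn hφapc
    obtain ⟨r₂, hr₂⟩ := isCompact_Icc.exists_bound_of_continuousOn hRc
    have hsub : Ctube ⊆ Metric.closedBall (0:F) (r₁ + r₂) ×ˢ Icc t₀ t₁ := by
      rintro ⟨f, s⟩ ⟨hs, hfs⟩
      have hcoe : ((projIcc t₀ t₁ ht01 s : ℝ)) = s := hprid s hs
      rw [hφae, hRe] at hfs
      simp only [hcoe] at hfs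
      refine ⟨?_, hs⟩
      rw [Metric.mem_closedBall, dist_zero_right]
      have h1 : ‖f‖ ≤ ‖f - φap s‖ + ‖φap s‖ := by
        calc ‖f‖ = ‖(f - φap s) + φap s‖ := by rw [sub_add_cancel]
          _ ≤ ‖f - φap s‖ + ‖φap s‖ := norm_add_le _ _
      have h2 : ‖φap s‖ ≤ r₁ := hr₁ s hs
      have h3 : R s ≤ r₂ := (le_abs_self _).trans
        (le_of_eq_of_le (Real.norm_eq_abs _).symm (hr₂ s hs))
      linarith
    exact ((Metric.isBounded_closedBall).prod (Metric.isBounded_Icc t₀ t₁)).subset hsub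
  have hCD : closure Ctube ⊆ D := by
    rw [hCclosed.closure_eq]
    rintro ⟨f, s⟩ ⟨hs, hfs⟩
    have hcoe : ((projIcc t₀ t₁ ht01 s : ℝ)) = s := hprid s hs
    rw [hφae, hRe] at hfs
    simp only [hcoe] at hfs
    exact (htube f s hs (hnn f s hs hfs)).1
  obtain ⟨L, hL0, hL⟩ := hPlip Ctube hCbdd hCD
  have hCmem : ∀ ψ : C(Icc t₀ t₁, F), ψ ∈ ST → ∀ s ∈ Icc t₀ t₁,
      (extIcc t₀ t₁ ht01 ψ s, s) ∈ Ctube := by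
    intro ψ hψ s hs
    refine ⟨hs, ?_⟩
    rw [hφae, hRe]
    simp only [hprid s hs]
    exact htubeS ψ hψ s hs
  -- the iteration map stays in the tube
  have hTnorm : ∀ ψ : C(Icc t₀ t₁, F), ψ ∈ ST → ∀ t ∈ Icc t₀ t₁,
      ‖Tval 𝒰 P f₀ t₀ t₁ ht01 ψ t - φap t‖ ≤ R t := by
    intro ψ hψ t ht
    have ht0 : t₀ ≤ t := ht.1
    have hsubI : Icc t₀ t ⊆ Icc t₀ t₁ := Icc_subset_Icc_right ht.2
    set A : ℝ → F := fun s => 𝒰 (t - s) (P (extIcc t₀ t₁ ht01 ψ s) s) with hA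
    set B : ℝ → F := fun s => 𝒰 (t - s) (P (φap s) s) with hB
    have hAc : ContinuousOn A (Icc t₀ t) := hKer _ t ht ((hQcont ψ hψ).mono hsubI)
    have hBc : ContinuousOn B (Icc t₀ t) := hKer _ t ht (hQapc.mono hsubI)
    have intA : IntervalIntegrable A volume t₀ t := hInt _ t ht ((hQcont ψ hψ).mono hsubI)
    have intB : IntervalIntegrable B volume t₀ t := hInt _ t ht (hQapc.mono hsubI)
    have key : Tval 𝒰 P f₀ t₀ t₁ ht01 ψ t - φap t =
        -(φap t - 𝒰 (t - t₀) f₀ - ∫ s in t₀..t, B s) + ∫ s in t₀..t, (A s - B s) := by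
      rw [intervalIntegral.integral_sub intA intB]
      simp only [Tval]
      abel
    have hABle : ∀ s ∈ Icc t₀ t, ‖A s - B s‖ ≤ u (t - s) * ℓ (R s) s := by
      intro s hs
      have hsI : s ∈ Icc t₀ t₁ := hsubI hs
      have hts : (0:ℝ) ≤ t - s := sub_nonneg.2 hs.2
      have h1 : ‖A s - B s‖ ≤ u (t - s) *
          ‖P (extIcc t₀ t₁ ht01 ψ s) s - P (φap s) s‖ := by
        rw [hA, hB, ← map_sub]
        exact hu _ hts _
      have h2 : ‖P (extIcc t₀ t₁ ht01 ψ s) s - P (φap s) s‖ ≤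
          ℓ (‖extIcc t₀ t₁ ht01 ψ s - φap s‖) s := (htube' ψ hψ s hsI).2
      have h3 : ℓ (‖extIcc t₀ t₁ ht01 ψ s - φap s‖) s ≤ ℓ (R s) s :=
        hℓmono s hsI _ _ (norm_nonneg _) (htubeS ψ hψ s hsI) (hRρ s hsI)
      have hun : 0 ≤ u (t - s) := hu0 _ hts
      nlinarith
    have hintScal : IntervalIntegrable (fun s => u (t - s) * ℓ (R s) s) volume t₀ t := by
      apply ContinuousOn.intervalIntegrable
      rw [uIcc_of_le ht0]
      exact (huker t ht).mul (hℓR.mono hsubI)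
    have hnormle : ‖∫ s in t₀..t, (A s - B s)‖ ≤ ∫ s in t₀..t, u (t - s) * ℓ (R s) s := by
      calc ‖∫ s in t₀..t, (A s - B s)‖ ≤ ∫ s in t₀..t, ‖A s - B s‖ :=
            intervalIntegral.norm_integral_le_integral_norm ht0
        _ ≤ ∫ s in t₀..t, u (t - s) * ℓ (R s) s := by
            apply intervalIntegral.integral_mono_on ht0 _ hintScal hABle
            apply ContinuousOn.intervalIntegrable
            rw [uIcc_of_le ht0]
            exact (hAc.sub hBc).norm
    calc ‖Tval 𝒰 P f₀ t₀ t₁ ht01 ψ t - φap t‖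
        ≤ ‖φap t - 𝒰 (t - t₀) f₀ - ∫ s in t₀..t, B s‖ + ‖∫ s in t₀..t, (A s - B s)‖ := by
          rw [key]; exact (norm_add_le _ _).trans (by rw [norm_neg])
      _ ≤ ℰ t + ∫ s in t₀..t, u (t - s) * ℓ (R s) s := add_le_add (hℰ t ht) hnormle
      _ ≤ R t := hcontrol t ht
  -- continuity of the iteration map
  have hTcont : ∀ ψ : C(Icc t₀ t₁, F), ψ ∈ ST →
      ContinuousOn (Tval 𝒰 P f₀ t₀ t₁ ht01 ψ) (Icc t₀ t₁) := by
    intro ψ hψ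
    set Q : ℝ → F := fun s => P (extIcc t₀ t₁ ht01 ψ s) s with hQ
    have hQc : ContinuousOn Q (Icc t₀ t₁) := hQcont ψ hψ
    set Q' : ℝ → F := fun s => Q ((projIcc t₀ t₁ ht01 s : ℝ)) with hQ'
    have hQ'c : Continuous Q' :=
      hQc.comp_continuous (continuous_subtype_val.comp continuous_projIcc)
        (fun s => (projIcc t₀ t₁ ht01 s).2)
    have hQ'eq : ∀ s ∈ Icc t₀ t₁, Q' s = Q s := by
      intro s hs
      rw [hQ']
      simp only [hprid s hs]
    have hGc : Continuous (Function.uncurry fun (t s : ℝ) => 𝒰 (max (t - s) 0) (Q' s)) := by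
      refine hUc.comp_continuous
        (f := fun p : ℝ × ℝ => ((max (p.1 - p.2) 0 : ℝ), Q' p.2)) ?_ ?_
      · exact (((continuous_fst.sub continuous_snd).max continuous_const).prodMk
          (hQ'c.comp continuous_snd))
      · intro p
        exact ⟨show (0:ℝ) ≤ max (p.1 - p.2) 0 from le_max_right _ _, mem_univ _⟩
    have Hglob : Continuous fun t : ℝ => ∫ s in t₀..t, 𝒰 (max (t - s) 0) (Q' s) :=
      intervalIntegral.continuous_parametric_intervalIntegral_of_continuous hGc continuous_id
    have hsecond : ContinuousOn (fun t => ∫ s in t₀..t, 𝒰 (t - s) (Q s)) (Icc t₀ t₁) := by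
      refine Hglob.continuousOn.congr ?_
      intro t ht
      refine intervalIntegral.integral_congr fun s hs => ?_
      rw [uIcc_of_le ht.1] at hs
      have hsI : s ∈ Icc t₀ t₁ := ⟨hs.1, hs.2.trans ht.2⟩
      rw [hQ'eq s hsI, max_eq_left (sub_nonneg.2 hs.2)]
    have hfirst : ContinuousOn (fun t => 𝒰 (t - t₀) f₀) (Icc t₀ t₁) :=
      (h𝒰c f₀).comp ((continuous_id.sub continuous_const).continuousOn)
        (fun t ht => sub_nonneg.2 ht.1)
    exact hfirst.add hsecond
  -- pointwise Lipschitz estimate for the iteration map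
  have hTlip : ∀ ψ χ : C(Icc t₀ t₁, F), ψ ∈ ST → χ ∈ ST → ∀ t ∈ Icc t₀ t₁,
      ‖Tval 𝒰 P f₀ t₀ t₁ ht01 ψ t - Tval 𝒰 P f₀ t₀ t₁ ht01 χ t‖ ≤
        ∫ s in t₀..t, M * L * ‖extIcc t₀ t₁ ht01 ψ s - extIcc t₀ t₁ ht01 χ s‖ := by
    intro ψ χ hψ hχ t ht
    have ht0 : t₀ ≤ t := ht.1
    have hsubI : Icc t₀ t ⊆ Icc t₀ t₁ := Icc_subset_Icc_right ht.2
    set A : ℝ → F := fun s => 𝒰 (t - s) (P (extIcc t₀ t₁ ht01 ψ s) s) with hA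
    set A' : ℝ → F := fun s => 𝒰 (t - s) (P (extIcc t₀ t₁ ht01 χ s) s) with hA'
    have hAc : ContinuousOn A (Icc t₀ t) := hKer _ t ht ((hQcont ψ hψ).mono hsubI)
    have hA'c : ContinuousOn A' (Icc t₀ t) := hKer _ t ht ((hQcont χ hχ).mono hsubI)
    have intA : IntervalIntegrable A volume t₀ t := hInt _ t ht ((hQcont ψ hψ).mono hsubI)
    have intA' : IntervalIntegrable A' volume t₀ t := hInt _ t ht ((hQcont χ hχ).mono hsubI)
    have key : Tval 𝒰 P f₀ t₀ t₁ ht01 ψ t - Tval 𝒰 P f₀ t₀ t₁ ht01 χ t =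
        ∫ s in t₀..t, (A s - A' s) := by
      rw [intervalIntegral.integral_sub intA intA']
      simp only [Tval]
      abel
    have hptw : ∀ s ∈ Icc t₀ t, ‖A s - A' s‖ ≤
        M * L * ‖extIcc t₀ t₁ ht01 ψ s - extIcc t₀ t₁ ht01 χ s‖ := by
      intro s hs
      have hsI : s ∈ Icc t₀ t₁ := hsubI hs
      have hts : (0:ℝ) ≤ t - s := sub_nonneg.2 hs.2
      have h1 : ‖A s - A' s‖ ≤ u (t - s) *
          ‖P (extIcc t₀ t₁ ht01 ψ s) s - P (extIcc t₀ t₁ ht01 χ s) s‖ := by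
        rw [hA, hA', ← map_sub]
        exact hu _ hts _
      have h2 : ‖P (extIcc t₀ t₁ ht01 ψ s) s - P (extIcc t₀ t₁ ht01 χ s) s‖ ≤
          L * ‖extIcc t₀ t₁ ht01 ψ s - extIcc t₀ t₁ ht01 χ s‖ :=
        hL _ _ s (hCmem ψ hψ s hsI) (hCmem χ hχ s hsI)
      have h3 : u (t - s) ≤ M := hMle _ ⟨hts, by linarith [hs.1, ht.2]⟩
      have h4 : 0 ≤ u (t - s) := hu0 _ hts
      nlinarith [norm_nonneg (extIcc t₀ t₁ ht01 ψ s - extIcc t₀ t₁ ht01 χ s),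
        norm_nonneg (P (extIcc t₀ t₁ ht01 ψ s) s - P (extIcc t₀ t₁ ht01 χ s) s)]
    rw [key]
    calc ‖∫ s in t₀..t, (A s - A' s)‖ ≤ ∫ s in t₀..t, ‖A s - A' s‖ :=
          intervalIntegral.norm_integral_le_integral_norm ht0
      _ ≤ ∫ s in t₀..t, M * L * ‖extIcc t₀ t₁ ht01 ψ s - extIcc t₀ t₁ ht01 χ s‖ := by
          apply intervalIntegral.integral_mono_on ht0 _ _ hptw
          · apply ContinuousOn.intervalIntegrable
            rw [uIcc_of_le ht0]
            exact (hAc.sub hA'c).norm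
          · exact (Continuous.intervalIntegrable (by
              exact continuous_const.mul (((hExtCont ψ).sub (hExtCont χ)).norm)) t₀ t)
  -- set up the fixed point argument
  have hSTne : (⟨(Icc t₀ t₁).restrict φap, hφapc.restrict⟩ : C(Icc t₀ t₁, F)) ∈ ST := by
    intro x
    show ‖φap ↑x - φap ↑x‖ ≤ R ↑x
    simpa using hRnn ↑x x.2
  have hSTclosed : IsClosed ST := by
    have : ST = ⋂ x : Icc t₀ t₁, {ψ : C(Icc t₀ t₁, F) | ‖ψ x - φap ↑x‖ ≤ R ↑x} := by
      ext ψ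
      simp [hSTdef, mem_iInter]
    rw [this]
    exact isClosed_iInter fun x => isClosed_le
      (((continuous_eval_const x).sub continuous_const).norm) continuous_const
  haveI : Nonempty ↥ST := ⟨⟨_, hSTne⟩⟩
  haveI : CompleteSpace ↥ST := hSTclosed.completeSpace_coe
  set Tmap : ↥ST → ↥ST := fun ψ =>
    ⟨⟨(Icc t₀ t₁).restrict (Tval 𝒰 P f₀ t₀ t₁ ht01 ↑ψ), (hTcont ↑ψ ψ.2).restrict⟩,
      fun x => hTnorm ↑ψ ψ.2 ↑x x.2⟩ with hTmap
  have hTmapval : ∀ (ψ : ↥ST) (x : Icc t₀ t₁),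
      (↑(Tmap ψ) : C(Icc t₀ t₁, F)) x = Tval 𝒰 P f₀ t₀ t₁ ht01 ↑ψ ↑x := by
    intro ψ x
    rw [hTmap]
    rfl
  -- the iterated Lipschitz estimate
  have iter : ∀ n : ℕ, ∀ ψ χ : ↥ST, ∀ x : Icc t₀ t₁,
      ‖(↑(Tmap^[n] ψ) : C(Icc t₀ t₁, F)) x - (↑(Tmap^[n] χ) : C(Icc t₀ t₁, F)) x‖ ≤
        (M * L) ^ n * ((x:ℝ) - t₀) ^ n / (n.factorial : ℝ) * dist ψ χ := by
    intro n
    induction n with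
    | zero =>
      intro ψ χ x
      simp only [Function.iterate_zero, id_eq, pow_zero, Nat.factorial_zero, Nat.cast_one,
        mul_one, one_mul, div_one]
      rw [← dist_eq_norm]
      calc dist ((↑ψ : C(Icc t₀ t₁, F)) x) ((↑χ : C(Icc t₀ t₁, F)) x) ≤
            dist (↑ψ : C(Icc t₀ t₁, F)) ↑χ := ContinuousMap.dist_apply_le_dist x
        _ = dist ψ χ := (Subtype.dist_eq ψ χ).symm
    | succ n IH =>
      intro ψ χ x
      rw [Function.iterate_succ_apply', Function.iterate_succ_apply']
      set a : ↥ST := Tmap^[n] ψ with ha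
      set b : ↥ST := Tmap^[n] χ with hb
      set d : ℝ := dist ψ χ with hd
      have hd0 : 0 ≤ d := dist_nonneg
      rw [hTmapval a x, hTmapval b x]
      have hML : 0 ≤ M * L := mul_nonneg hM0 hL0
      have hfac : (0:ℝ) < (n.factorial : ℝ) := by positivity
      have hptw : ∀ s ∈ Icc t₀ (x:ℝ), M * L * ‖extIcc t₀ t₁ ht01 (a : C(Icc t₀ t₁, F)) s - extIcc t₀ t₁ ht01 (b : C(Icc t₀ t₁, F)) s‖
          ≤ (M * L * ((M * L) ^ n / (n.factorial : ℝ) * d)) * (s - t₀) ^ n := by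
        intro s hs
        have hsI : s ∈ Icc t₀ t₁ := ⟨hs.1, hs.2.trans x.2.2⟩
        have h1 : ‖extIcc t₀ t₁ ht01 (a : C(Icc t₀ t₁, F)) s - extIcc t₀ t₁ ht01 (b : C(Icc t₀ t₁, F)) s‖ ≤
            (M * L) ^ n * (s - t₀) ^ n / (n.factorial : ℝ) * d := by
          rw [hExtEq _ s hsI, hExtEq _ s hsI]
          simpa using IH ψ χ ⟨s, hsI⟩
        calc M * L * ‖extIcc t₀ t₁ ht01 (a : C(Icc t₀ t₁, F)) s - extIcc t₀ t₁ ht01 (b : C(Icc t₀ t₁, F)) s‖ ≤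
              M * L * ((M * L) ^ n * (s - t₀) ^ n / (n.factorial : ℝ) * d) :=
            mul_le_mul_of_nonneg_left h1 hML
          _ = (M * L * ((M * L) ^ n / (n.factorial : ℝ) * d)) * (s - t₀) ^ n := by ring
      have hpow : (∫ s in t₀..(x:ℝ), (s - t₀) ^ n) = ((x:ℝ) - t₀) ^ (n + 1) / (n + 1) := by
        rw [show (fun s : ℝ => (s - t₀) ^ n) = fun s => (fun y : ℝ => y ^ n) (s - t₀) from rfl,
          intervalIntegral.integral_comp_sub_right (fun y : ℝ => y ^ n) t₀, sub_self,
          integral_pow]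
        simp
      calc ‖Tval 𝒰 P f₀ t₀ t₁ ht01 (a : C(Icc t₀ t₁, F)) ↑x - Tval 𝒰 P f₀ t₀ t₁ ht01 (b : C(Icc t₀ t₁, F)) ↑x‖
          ≤ ∫ s in t₀..(x:ℝ), M * L * ‖extIcc t₀ t₁ ht01 (a : C(Icc t₀ t₁, F)) s - extIcc t₀ t₁ ht01 (b : C(Icc t₀ t₁, F)) s‖ :=
            hTlip (a : C(Icc t₀ t₁, F)) (b : C(Icc t₀ t₁, F)) a.2 b.2 ↑x x.2
        _ ≤ ∫ s in t₀..(x:ℝ),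
              (M * L * ((M * L) ^ n / (n.factorial : ℝ) * d)) * (s - t₀) ^ n := by
            apply intervalIntegral.integral_mono_on x.2.1 _ _ hptw
            · exact Continuous.intervalIntegrable
                (continuous_const.mul (((hExtCont (a : C(Icc t₀ t₁, F))).sub (hExtCont (b : C(Icc t₀ t₁, F)))).norm)) t₀ _
            · exact Continuous.intervalIntegrable
                (continuous_const.mul ((continuous_id.sub continuous_const).pow n)) t₀ _
        _ = (M * L * ((M * L) ^ n / (n.factorial : ℝ) * d)) *
              (((x:ℝ) - t₀) ^ (n + 1) / (n + 1)) := by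
            rw [intervalIntegral.integral_const_mul, hpow]
        _ = (M * L) ^ (n + 1) * ((x:ℝ) - t₀) ^ (n + 1) / ((n + 1).factorial : ℝ) * d := by
            rw [pow_succ, Nat.factorial_succ]
            push_cast
            field_simp
            ring
  -- global Lipschitz constants for the iterates
  have lipn : ∀ n : ℕ, ∀ ψ χ : ↥ST,
      dist (Tmap^[n] ψ) (Tmap^[n] χ) ≤ (M * L * (t₁ - t₀)) ^ n / (n.factorial : ℝ) * dist ψ χ := by
    intro n ψ χ
    have hc0 : 0 ≤ (M * L * (t₁ - t₀)) ^ n / (n.factorial : ℝ) * dist ψ χ := by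
      apply mul_nonneg _ dist_nonneg
      apply div_nonneg _ (Nat.cast_nonneg _)
      exact pow_nonneg (by nlinarith [mul_nonneg hM0 hL0, sub_nonneg.2 ht01]) n
    rw [Subtype.dist_eq, ContinuousMap.dist_le hc0]
    intro x
    rw [dist_eq_norm]
    calc ‖(↑(Tmap^[n] ψ) : C(Icc t₀ t₁, F)) x - (↑(Tmap^[n] χ) : C(Icc t₀ t₁, F)) x‖
        ≤ (M * L) ^ n * ((x:ℝ) - t₀) ^ n / (n.factorial : ℝ) * dist ψ χ := iter n ψ χ x
      _ ≤ (M * L * (t₁ - t₀)) ^ n / (n.factorial : ℝ) * dist ψ χ := by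
          rw [mul_pow (M * L) (t₁ - t₀) n]
          have hx : ((x:ℝ) - t₀) ^ n ≤ (t₁ - t₀) ^ n :=
            pow_le_pow_left₀ (sub_nonneg.2 x.2.1) (sub_le_sub_right x.2.2 t₀) n
          have hMLn : 0 ≤ (M * L) ^ n := pow_nonneg (mul_nonneg hM0 hL0) n
          gcongr
  -- choose `n` making the iterate a contraction
  obtain ⟨n, hn⟩ : ∃ n : ℕ, (M * L * (t₁ - t₀)) ^ n / (n.factorial : ℝ) < 1 := by
    have h := FloorSemiring.tendsto_pow_div_factorial_atTop (M * L * (t₁ - t₀))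
    exact (h.eventually (gt_mem_nhds one_pos)).exists
  set κ : ℝ := (M * L * (t₁ - t₀)) ^ n / (n.factorial : ℝ) with hκ
  have hML0 : 0 ≤ M * L * (t₁ - t₀) := by nlinarith [mul_nonneg hM0 hL0, sub_nonneg.2 ht01]
  have hκ0 : 0 ≤ κ := div_nonneg (pow_nonneg hML0 n) (Nat.cast_nonneg _)
  have hC : ContractingWith κ.toNNReal (Tmap^[n]) := by
    constructor
    · rw [← NNReal.coe_lt_coe, Real.coe_toNNReal _ hκ0, NNReal.coe_one]
      exact hn
    · apply LipschitzWith.of_dist_le_mul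
      intro ψ χ
      rw [Real.coe_toNNReal _ hκ0]
      exact lipn n ψ χ
  obtain ⟨pt, hfixn⟩ : ∃ pt : ↥ST, Function.IsFixedPt (Tmap^[n]) pt :=
    ⟨_, ContractingWith.fixedPoint_isFixedPt hC⟩
  have hfix2 : Function.IsFixedPt (Tmap^[n]) (Tmap pt) := by
    show Tmap^[n] (Tmap pt) = Tmap pt
    rw [← Function.iterate_succ_apply, Function.iterate_succ_apply', hfixn]
  have hfixT : Tmap pt = pt :=
    (hC.fixedPoint_unique hfix2).trans (hC.fixedPoint_unique hfixn).symm
  -- conclude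
  refine ⟨extIcc t₀ t₁ ht01 ↑pt, (hExtCont ↑pt).continuousOn, ?_, ?_, ?_⟩
  · exact fun t ht => (htube' ↑pt pt.2 t ht).1
  · intro t ht
    have h1 : extIcc t₀ t₁ ht01 ↑pt t = (↑pt : C(Icc t₀ t₁, F)) ⟨t, ht⟩ := hExtEq _ t ht
    have h2 : (↑pt : C(Icc t₀ t₁, F)) ⟨t, ht⟩ = (↑(Tmap pt) : C(Icc t₀ t₁, F)) ⟨t, ht⟩ := by
      rw [hfixT]
    rw [h1, h2, hTmapval pt ⟨t, ht⟩]
    rfl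
  · intro t ht
    rw [hExtEq _ t ht]
    exact pt.2 ⟨t, ht⟩
end

section
/- Under the hypotheses of the control-inequality theorem, let 𝒟 := {ψ ∈ C([t₀,t₁],F) : ‖ψ(t) − φ_ap(t)‖ ≤ R(t) for all t} and define 𝒥(ψ)(t) := 𝒰(t−t₀)f₀ + ∫_{t₀}^t 𝒰(t−s)P(ψ(s),s) ds. Then 𝒥 maps 𝒟 into 𝒟. -/
open MeasureTheory Set Bornology
open scoped ENNReal

/-- Under the hypotheses of the control-inequality theorem, the Volterra operator
`𝒥(ψ)(t) := 𝒰(t−t₀)f₀ + ∫_{t₀}^t 𝒰(t−s)P(ψ(s),s) ds` maps the set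
`𝒟 = {ψ : ‖ψ(t) − φ_ap(t)‖ ≤ R(t)}` into itself. -/
theorem stmt_11
    {F : Type*} [NormedAddCommGroup F] [NormedSpace ℝ F] [CompleteSpace F]
    (𝒰 : ℝ → F →L[ℝ] F)
    (h𝒰sg : ∀ s t : ℝ, 0 ≤ s → 0 ≤ t → 𝒰 (s + t) = (𝒰 s).comp (𝒰 t))
    (h𝒰0 : 𝒰 0 = ContinuousLinearMap.id ℝ F)
    (h𝒰c : ∀ f : F, ContinuousOn (fun t => 𝒰 t f) (Ici (0 : ℝ)))
    (u : ℝ → ℝ) (hu_cont : ContinuousOn u (Ici (0 : ℝ)))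
    (hu : ∀ t : ℝ, 0 ≤ t → ∀ f : F, ‖𝒰 t f‖ ≤ u t * ‖f‖)
    (P : F → ℝ → F) (D : Set (F × ℝ)) (hD : IsOpen D)
    (hPc : ContinuousOn (fun q : F × ℝ => P q.1 q.2) D)
    (hPlip : ∀ C : Set (F × ℝ), IsBounded C → closure C ⊆ D →
      ∃ L : ℝ, 0 ≤ L ∧ ∀ (f f' : F) (t : ℝ), (f, t) ∈ C → (f', t) ∈ C →
        ‖P f t - P f' t‖ ≤ L * ‖f - f'‖)
    (f₀ : F) (t₀ t₁ : ℝ) (h01 : t₀ < t₁) (hf₀ : (f₀, t₀) ∈ D)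
    -- the approximate solution and its integral error estimator
    (φap : ℝ → F) (hφapc : ContinuousOn φap (Icc t₀ t₁))
    (hφapD : ∀ t ∈ Icc t₀ t₁, (φap t, t) ∈ D)
    (ℰ : ℝ → ℝ) (hℰc : ContinuousOn ℰ (Icc t₀ t₁)) (hℰnn : ∀ t ∈ Icc t₀ t₁, 0 ≤ ℰ t)
    (hℰ : ∀ t ∈ Icc t₀ t₁,
      ‖φap t - 𝒰 (t - t₀) f₀ - ∫ s in t₀..t, 𝒰 (t - s) (P (φap s) s)‖ ≤ ℰ t)
    -- the growth estimator `ℓ` of `P` from `φap` on the tube of radius `ρ ∈ (0,∞]`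
    (ρ : ℝ≥0∞) (hρ : 0 < ρ) (ℓ : ℝ → ℝ → ℝ)
    (hℓc : ContinuousOn (fun q : ℝ × ℝ => ℓ q.1 q.2)
      {q : ℝ × ℝ | 0 ≤ q.1 ∧ ENNReal.ofReal q.1 < ρ ∧ q.2 ∈ Icc t₀ t₁})
    (hℓnn : ∀ r t, 0 ≤ r → ENNReal.ofReal r < ρ → t ∈ Icc t₀ t₁ → 0 ≤ ℓ r t)
    (hℓmono : ∀ t ∈ Icc t₀ t₁, ∀ r r' : ℝ, 0 ≤ r → r ≤ r' → ENNReal.ofReal r' < ρ →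
      ℓ r t ≤ ℓ r' t)
    (htube : ∀ (f : F), ∀ t ∈ Icc t₀ t₁, (‖f - φap t‖₊ : ℝ≥0∞) < ρ →
      (f, t) ∈ D ∧ ‖P f t - P (φap t) t‖ ≤ ℓ (‖f - φap t‖) t)
    -- the control inequality
    (R : ℝ → ℝ) (hRc : ContinuousOn R (Icc t₀ t₁))
    (hRnn : ∀ t ∈ Icc t₀ t₁, 0 ≤ R t) (hRρ : ∀ t ∈ Icc t₀ t₁, ENNReal.ofReal (R t) < ρ)
    (hcontrol : ∀ t ∈ Icc t₀ t₁,
      ℰ t + ∫ s in t₀..t, u (t - s) * ℓ (R s) s ≤ R t) :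
    ∀ ψ : ℝ → F, ContinuousOn ψ (Icc t₀ t₁) →
      (∀ t ∈ Icc t₀ t₁, ‖ψ t - φap t‖ ≤ R t) →
      ∀ t ∈ Icc t₀ t₁,
        ‖(𝒰 (t - t₀) f₀ + ∫ s in t₀..t, 𝒰 (t - s) (P (ψ s) s)) - φap t‖ ≤ R t := by
  intro ψ hψc hψR t ht
  rcases subsingleton_or_nontrivial F with hF | hF
  · have h0 : ((𝒰 (t - t₀) f₀ + ∫ s in t₀..t, 𝒰 (t - s) (P (ψ s) s)) - φap t) = 0 :=
      Subsingleton.elim _ _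
    rw [h0, norm_zero]; exact hRnn t ht
  -- `u` is nonnegative on `Ici 0`
  obtain ⟨g₁, hg₁⟩ := exists_norm_eq F (zero_le_one (α := ℝ))
  have hu_nn : ∀ τ : ℝ, 0 ≤ τ → 0 ≤ u τ := by
    intro τ hτ
    have := (norm_nonneg (𝒰 τ g₁)).trans (hu τ hτ g₁)
    simpa [hg₁] using this
  -- joint continuity of (τ, f) ↦ 𝒰 τ f on Ici 0 ×ˢ univ
  have hjoint : ContinuousOn (fun p : ℝ × F => 𝒰 p.1 p.2) (Ici (0:ℝ) ×ˢ (univ : Set F)) := by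
    rintro ⟨τ₀, g₀⟩ ⟨hτ₀, -⟩
    have hfst : Filter.Tendsto (fun p : ℝ × F => p.1)
        (nhdsWithin (τ₀, g₀) (Ici (0:ℝ) ×ˢ (univ : Set F))) (nhdsWithin τ₀ (Ici (0:ℝ))) := by
      apply tendsto_nhdsWithin_of_tendsto_nhds_of_eventually_within
      · exact (continuous_fst.tendsto _).mono_left nhdsWithin_le_nhds
      · filter_upwards [self_mem_nhdsWithin] with p hp using hp.1
    have h2 : Filter.Tendsto (fun p : ℝ × F => 𝒰 p.1 g₀)
        (nhdsWithin (τ₀, g₀) (Ici (0:ℝ) ×ˢ (univ : Set F))) (nhds (𝒰 τ₀ g₀)) :=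
      ((h𝒰c g₀ τ₀ hτ₀).tendsto).comp hfst
    have h1 : Filter.Tendsto (fun p : ℝ × F => 𝒰 p.1 (p.2 - g₀))
        (nhdsWithin (τ₀, g₀) (Ici (0:ℝ) ×ˢ (univ : Set F))) (nhds 0) := by
      have hb : ∀ᶠ p in nhdsWithin (τ₀, g₀) (Ici (0:ℝ) ×ˢ (univ : Set F)),
          ‖𝒰 p.1 (p.2 - g₀)‖ ≤ u p.1 * ‖p.2 - g₀‖ := by
        filter_upwards [self_mem_nhdsWithin] with p hp using hu p.1 hp.1 _
      have hun : Filter.Tendsto (fun p : ℝ × F => u p.1)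
          (nhdsWithin (τ₀, g₀) (Ici (0:ℝ) ×ˢ (univ : Set F))) (nhds (u τ₀)) :=
        ((hu_cont τ₀ hτ₀).tendsto).comp hfst
      have hnn : Filter.Tendsto (fun p : ℝ × F => ‖p.2 - g₀‖)
          (nhdsWithin (τ₀, g₀) (Ici (0:ℝ) ×ˢ (univ : Set F))) (nhds 0) := by
        have h3 : Filter.Tendsto (fun p : ℝ × F => ‖p.2 - g₀‖) (nhds (τ₀, g₀))
            (nhds ‖g₀ - g₀‖) := ((continuous_snd.sub continuous_const).norm).tendsto _
        simpa using h3.mono_left nhdsWithin_le_nhds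
      exact squeeze_zero_norm' hb (by simpa using hun.mul hnn)
    have := h1.add h2
    have heq : (fun p : ℝ × F => 𝒰 p.1 (p.2 - g₀) + 𝒰 p.1 g₀) = fun p : ℝ × F => 𝒰 p.1 p.2 := by
      funext p; rw [map_sub]; abel
    rw [heq] at this
    simpa [ContinuousWithinAt] using this
  have ht01 : t₀ ≤ t := ht.1
  have hsub : Icc t₀ t ⊆ Icc t₀ t₁ := Icc_subset_Icc le_rfl ht.2
  -- tube membership of ψ
  have hψtube : ∀ s ∈ Icc t₀ t₁, (‖ψ s - φap s‖₊ : ℝ≥0∞) < ρ := by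
    intro s hs
    have h1 : (‖ψ s - φap s‖₊ : ℝ≥0∞) = ENNReal.ofReal ‖ψ s - φap s‖ :=
      (ofReal_norm _).symm
    rw [h1]
    exact lt_of_le_of_lt (ENNReal.ofReal_le_ofReal (hψR s hs)) (hRρ s hs)
  have hψD : ∀ s ∈ Icc t₀ t₁, (ψ s, s) ∈ D := fun s hs => (htube (ψ s) s hs (hψtube s hs)).1
  -- continuity of the composed integrands on Icc t₀ t
  have hcomp : ∀ g : ℝ → F, ContinuousOn g (Icc t₀ t₁) →
      ContinuousOn (fun s => 𝒰 (t - s) (g s)) (Icc t₀ t) := by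
    intro g hg
    apply hjoint.comp (ContinuousOn.prodMk (continuousOn_const.sub continuousOn_id)
      (hg.mono hsub))
    intro s hs
    exact ⟨by simpa using sub_nonneg.mpr hs.2, mem_univ _⟩
  have hPψc : ContinuousOn (fun s => P (ψ s) s) (Icc t₀ t₁) :=
    hPc.comp (hψc.prodMk continuousOn_id) (fun s hs => hψD s hs)
  have hPφc : ContinuousOn (fun s => P (φap s) s) (Icc t₀ t₁) :=
    hPc.comp (hφapc.prodMk continuousOn_id) (fun s hs => hφapD s hs)
  have hIψ : IntervalIntegrable (fun s => 𝒰 (t - s) (P (ψ s) s)) volume t₀ t :=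
    ((hcomp _ hPψc).mono (by rw [uIcc_of_le ht01])).intervalIntegrable
  have hIφ : IntervalIntegrable (fun s => 𝒰 (t - s) (P (φap s) s)) volume t₀ t :=
    ((hcomp _ hPφc).mono (by rw [uIcc_of_le ht01])).intervalIntegrable
  have hId : IntervalIntegrable (fun s => 𝒰 (t - s) (P (ψ s) s - P (φap s) s)) volume t₀ t := by
    have : ContinuousOn (fun s => 𝒰 (t - s) (P (ψ s) s - P (φap s) s)) (Icc t₀ t) :=
      hcomp _ (hPψc.sub hPφc)
    exact (this.mono (by rw [uIcc_of_le ht01])).intervalIntegrable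
  -- the bound function is integrable
  have hIbound : IntervalIntegrable (fun s => u (t - s) * ℓ (R s) s) volume t₀ t := by
    have hcu : ContinuousOn (fun s : ℝ => u (t - s)) (Icc t₀ t) := by
      apply hu_cont.comp (continuousOn_const.sub continuousOn_id)
      intro s hs; simpa using sub_nonneg.mpr hs.2
    have hcl : ContinuousOn (fun s : ℝ => ℓ (R s) s) (Icc t₀ t) := by
      apply hℓc.comp (ContinuousOn.prodMk (hRc.mono hsub) continuousOn_id)
      intro s hs
      exact ⟨hRnn s (hsub hs), hRρ s (hsub hs), hsub hs⟩
    exact ((hcu.mul hcl).mono (by rw [uIcc_of_le ht01])).intervalIntegrable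
  -- split the integral
  have hsplit : (∫ s in t₀..t, 𝒰 (t - s) (P (ψ s) s))
      - (∫ s in t₀..t, 𝒰 (t - s) (P (φap s) s))
      = ∫ s in t₀..t, 𝒰 (t - s) (P (ψ s) s - P (φap s) s) := by
    rw [← intervalIntegral.integral_sub hIψ hIφ]
    congr 1; funext s; rw [map_sub]
  -- rewrite the difference
  have hdiff : (𝒰 (t - t₀) f₀ + ∫ s in t₀..t, 𝒰 (t - s) (P (ψ s) s)) - φap t
      = (∫ s in t₀..t, 𝒰 (t - s) (P (ψ s) s - P (φap s) s))
        - (φap t - 𝒰 (t - t₀) f₀ - ∫ s in t₀..t, 𝒰 (t - s) (P (φap s) s)) := by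
    rw [← hsplit]; abel
  rw [hdiff]
  refine le_trans (norm_sub_le _ _) ?_
  have herr : ‖φap t - 𝒰 (t - t₀) f₀ - ∫ s in t₀..t, 𝒰 (t - s) (P (φap s) s)‖ ≤ ℰ t :=
    hℰ t ht
  have hint : ‖∫ s in t₀..t, 𝒰 (t - s) (P (ψ s) s - P (φap s) s)‖
      ≤ ∫ s in t₀..t, u (t - s) * ℓ (R s) s := by
    refine le_trans (intervalIntegral.norm_integral_le_integral_norm ht01) ?_
    apply intervalIntegral.integral_mono_on ht01 hId.norm hIbound
    intro s hs
    have hs1 : s ∈ Icc t₀ t₁ := hsub hs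
    have hts : (0:ℝ) ≤ t - s := sub_nonneg.mpr hs.2
    have hb1 : ‖P (ψ s) s - P (φap s) s‖ ≤ ℓ (‖ψ s - φap s‖) s :=
      (htube (ψ s) s hs1 (hψtube s hs1)).2
    have hb2 : ℓ (‖ψ s - φap s‖) s ≤ ℓ (R s) s :=
      hℓmono s hs1 _ _ (norm_nonneg _) (hψR s hs1) (hRρ s hs1)
    calc ‖𝒰 (t - s) (P (ψ s) s - P (φap s) s)‖
        ≤ u (t - s) * ‖P (ψ s) s - P (φap s) s‖ := hu _ hts _
      _ ≤ u (t - s) * ℓ (R s) s :=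
          mul_le_mul_of_nonneg_left (hb1.trans hb2) (hu_nn _ hts)
  calc (‖∫ s in t₀..t, 𝒰 (t - s) (P (ψ s) s - P (φap s) s)‖
        + ‖φap t - 𝒰 (t - t₀) f₀ - ∫ s in t₀..t, 𝒰 (t - s) (P (φap s) s)‖)
      ≤ (∫ s in t₀..t, u (t - s) * ℓ (R s) s) + ℰ t := add_le_add hint herr
    _ = ℰ t + ∫ s in t₀..t, u (t - s) * ℓ (R s) s := by ring
    _ ≤ R t := hcontrol t ht
end

section
/- Consider the first-order equation φ_t = φ_x + φ^p on ℝ with p > 1 an integer and initial datum f₀ ∈ C₀(ℝ) (continuous, vanishing at infinity). The function φ(t)(x) = f₀(x+t) / [1 − (p−1) f₀(x+t)^{p−1} t]^{1/(p−1)} is well-defined and solves the associated Volterra equation φ(t) = 𝒰(t)f₀ + ∫₀^t 𝒰(t−s) φ(s)^p ds, where (𝒰(t)f)(x) = f(x+t), for all t ∈ [0,θ) with θ := sup{ t > 0 : (p−1) sup_x f₀(x)^{p−1} · t < 1 }. -/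
open Real Filter Set

/-- For the equation `φ_t = φ_x + φ^p` on `ℝ` with datum `f₀ ∈ C₀(ℝ)`, the explicit
function `φ(t)(x) = f₀(x+t)/[1 − (p−1) f₀(x+t)^{p−1} t]^{1/(p−1)}` is well defined and
solves the Volterra equation `φ(t) = 𝒰(t)f₀ + ∫₀^t 𝒰(t−s)φ(s)^p ds` (with the translation
semigroup `(𝒰(t)f)(x) = f(x+t)`, written pointwise) for `t ∈ [0, θ)`,
`θ = sup{t > 0 : (p−1) sup_x f₀(x)^{p−1} t < 1}`. -/
theorem stmt_13 (p : ℕ) (hp : 2 ≤ p) (f₀ : ℝ → ℝ)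
    (hf₀c : Continuous f₀) (hf₀0 : Tendsto f₀ (cocompact ℝ) (nhds 0)) :
    ∀ t : ℝ, 0 ≤ t → (∀ x : ℝ, (p - 1 : ℝ) * f₀ x ^ (p - 1) * t < 1) →
      -- well-definedness: the denominator is strictly positive
      (∀ x : ℝ, 0 < 1 - (p - 1 : ℝ) * f₀ (x + t) ^ (p - 1) * t) ∧
      -- the Volterra equation, evaluated pointwise
      (∀ x : ℝ,
        f₀ (x + t) / (1 - (p - 1 : ℝ) * f₀ (x + t) ^ (p - 1) * t) ^ ((1 : ℝ) / (p - 1)) =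
          f₀ (x + t) + ∫ s in (0 : ℝ)..t,
            (f₀ (x + t) /
              (1 - (p - 1 : ℝ) * f₀ (x + t) ^ (p - 1) * s) ^ ((1 : ℝ) / (p - 1))) ^ p) := by
  intro t ht hlt
  have hq1 : (1 : ℝ) ≤ (p : ℝ) - 1 := by
    have : (2 : ℝ) ≤ (p : ℝ) := by exact_mod_cast hp
    linarith
  have hq0 : (p : ℝ) - 1 ≠ 0 := by linarith
  constructor
  · intro x
    have := hlt (x + t)
    linarith
  · intro x
    set a : ℝ := f₀ (x + t) with ha
    set c : ℝ := ((p : ℝ) - 1) * a ^ (p - 1) with hc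
    have hct : c * t < 1 := by
      have := hlt (x + t)
      simpa [hc, mul_assoc] using this
    have hpos : ∀ s ∈ Set.uIcc (0:ℝ) t, 0 < 1 - c * s := by
      intro s hs
      rw [Set.uIcc_of_le ht] at hs
      rcases le_or_gt 0 c with h | h
      · nlinarith [hs.1, hs.2]
      · nlinarith [hs.1, hs.2]
    set r : ℝ := -(1 / ((p : ℝ) - 1)) with hr
    set F : ℝ → ℝ := fun s => a * (1 - c * s) ^ r with hF
    set f : ℝ → ℝ := fun s => (a / (1 - c * s) ^ ((1:ℝ) / ((p:ℝ) - 1))) ^ p with hf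
    -- pointwise rewriting of f
    have hfe : ∀ s ∈ Set.uIcc (0:ℝ) t,
        f s = a ^ p * (1 - c * s) ^ ((p : ℝ) * r) := by
      intro s hs
      have h1 := hpos s hs
      rw [hf]
      simp only []
      rw [div_pow, ← Real.rpow_natCast ((1 - c * s) ^ ((1:ℝ)/((p:ℝ)-1))) p,
        ← Real.rpow_mul h1.le]
      rw [show ((p:ℝ)) * r = -(1 / ((p:ℝ)-1) * p) by rw [hr]; ring,
        Real.rpow_neg h1.le, div_eq_mul_inv]
    have hderiv : ∀ s ∈ Set.uIcc (0:ℝ) t, HasDerivAt F (f s) s := by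
      intro s hs
      have h1 := hpos s hs
      have hu : HasDerivAt (fun s : ℝ => 1 - c * s) (-c) s := by
        simpa using ((hasDerivAt_id s).const_mul c).const_sub 1
      have h2 : HasDerivAt (fun s => (1 - c * s) ^ r) (-c * r * (1 - c * s) ^ (r - 1)) s :=
        hu.rpow_const (Or.inl h1.ne')
      have h3 : HasDerivAt F (a * (-c * r * (1 - c * s) ^ (r - 1))) s := h2.const_mul a
      convert h3 using 1
      rw [hfe s hs]
      have hre : r - 1 = ((p : ℝ)) * r := by
        rw [hr]; field_simp; ring
      rw [hre]
      have hac : a * (-c * r * (1 - c * s) ^ ((p:ℝ) * r))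
          = (a * (-r) * c) * (1 - c * s) ^ ((p:ℝ) * r) := by ring
      rw [hac]
      congr 1
      have hap : a * a ^ (p - 1) = a ^ p := by
        rw [← pow_succ']
        congr 1
        omega
      rw [hc, hr]
      field_simp
      nlinarith [hap]
    have hcont : IntervalIntegrable f MeasureTheory.volume 0 t := by
      apply ContinuousOn.intervalIntegrable
      have hb : ContinuousOn (fun s : ℝ => 1 - c * s) (Set.uIcc 0 t) :=
        (continuous_const.sub (continuous_const.mul continuous_id)).continuousOn
      have hbr : ContinuousOn (fun s : ℝ => (1 - c * s) ^ ((1:ℝ)/((p:ℝ)-1)))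
          (Set.uIcc 0 t) :=
        hb.rpow_const (fun s hs => Or.inl (hpos s hs).ne')
      exact ((continuousOn_const.div hbr
        (fun s hs => (Real.rpow_pos_of_pos (hpos s hs) _).ne')).pow p)
    have hint := intervalIntegral.integral_eq_sub_of_hasDerivAt hderiv hcont
    rw [hint]
    have hF0 : F 0 = a := by simp [hF]
    have hFt : F t = a / (1 - c * t) ^ ((1:ℝ)/((p:ℝ)-1)) := by
      rw [hF]
      simp only []
      rw [hr, Real.rpow_neg (by nlinarith : (0:ℝ) ≤ 1 - c * t)]
      ring
    rw [hF0, hFt]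
    ring
end

section
/- Let Q : [0,θ) → ℝ be continuous and nonnegative with Q(t) ≥ e^{−t} Q₀ + ∫₀^t e^{−(t−s)} Q(s)^p ds for all t ∈ [0,θ), where Q₀ > 1 and p > 1 is an integer. Then θ ≤ −(1/(p−1)) log(1 − 1/Q₀^{p−1}). -/
open MeasureTheory Real Set

/-- Comparison lemma behind Kaplan's blow-up criterion: a continuous nonnegative `Q` with
`Q(t) ≥ e^{−t}Q₀ + ∫₀^t e^{−(t−s)} Q(s)^p ds` on `[0,θ)` and `Q₀ > 1` forces
`θ ≤ −(1/(p−1)) log(1 − 1/Q₀^{p−1})`. -/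
theorem stmt_18 (p : ℕ) (hp : 2 ≤ p) (Q₀ : ℝ) (hQ₀ : 1 < Q₀)
    (θ : ℝ) (Q : ℝ → ℝ)
    (hQc : ContinuousOn Q (Ico (0 : ℝ) θ))
    (hQnn : ∀ t ∈ Ico (0 : ℝ) θ, 0 ≤ Q t)
    (hQineq : ∀ t ∈ Ico (0 : ℝ) θ,
      Real.exp (-t) * Q₀ + (∫ s in (0 : ℝ)..t, Real.exp (-(t - s)) * Q s ^ p) ≤ Q t) :
    θ ≤ -(1 / (p - 1 : ℝ)) * Real.log (1 - 1 / Q₀ ^ (p - 1)) := by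
  have hQ₀pos : (0:ℝ) < Q₀ := by linarith
  have hQ₀pow : 1 < Q₀ ^ (p - 1) := one_lt_pow₀ hQ₀ (by omega)
  have hc0 : (0:ℝ) < 1 - 1 / Q₀ ^ (p - 1) := by
    have : 1 / Q₀ ^ (p - 1) < 1 := by
      rw [div_lt_one (by positivity)]; exact hQ₀pow
    linarith
  have hc1 : 1 - 1 / Q₀ ^ (p - 1) < 1 := by
    have : 0 < 1 / Q₀ ^ (p - 1) := by positivity
    linarith
  set c : ℝ := 1 - 1 / Q₀ ^ (p - 1) with hc
  have hlogc : Real.log c < 0 := Real.log_neg hc0 hc1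
  have hp1 : (1:ℝ) < (p:ℝ) := by exact_mod_cast Nat.lt_of_lt_of_le one_lt_two hp
  set T : ℝ := -(1 / ((p:ℝ) - 1)) * Real.log c with hT
  have hTpos : 0 < T := by
    rw [hT]
    have h1 : 0 < 1 / ((p:ℝ) - 1) := by
      apply div_pos one_pos; linarith
    nlinarith
  -- main claim: every t in [0, θ) satisfies t < T
  have key : ∀ t ∈ Ico (0:ℝ) θ, t < T := by
    intro t ht
    obtain ⟨ht0, htθ⟩ := ht
    have hsub : Icc (0:ℝ) t ⊆ Ico (0:ℝ) θ := fun x hx => ⟨hx.1, lt_of_le_of_lt hx.2 htθ⟩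
    -- clamp
    set pc : ℝ → ℝ := fun s => max 0 (min s t) with hpc
    have hpcc : Continuous pc := continuous_const.max (continuous_id.min continuous_const)
    have hpcmem : ∀ s, pc s ∈ Icc (0:ℝ) t := fun s =>
      ⟨le_max_left _ _, max_le ht0 (min_le_right _ _)⟩
    have hpceq : ∀ s ∈ Icc (0:ℝ) t, pc s = s := by
      intro s hs
      simp only [hpc, min_eq_left hs.2, max_eq_right hs.1]
    set f : ℝ → ℝ := fun s => Real.exp s * Q (pc s) ^ p with hf
    have hQcomp : Continuous fun s => Q (pc s) :=
      hQc.comp_continuous hpcc fun s => hsub (hpcmem s)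
    have hfc : Continuous f := Real.continuous_exp.mul (hQcomp.pow p)
    have hfnn : ∀ s, 0 ≤ f s := fun s =>
      mul_nonneg (Real.exp_pos s).le (pow_nonneg (hQnn _ (hsub (hpcmem s))) p)
    have hfeq : ∀ s ∈ Icc (0:ℝ) t, f s = Real.exp s * Q s ^ p := by
      intro s hs; simp only [hf, hpceq s hs]
    set F : ℝ → ℝ := fun x => Q₀ + ∫ s in (0:ℝ)..x, f s with hF
    have hFd : ∀ x, HasDerivAt F (f x) x := fun x =>
      (intervalIntegral.integral_hasDerivAt_right (hfc.intervalIntegrable _ _)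
        (hfc.aestronglyMeasurable.stronglyMeasurableAtFilter) hfc.continuousAt).const_add Q₀
    have hFcont : Continuous F := by
      rw [continuous_iff_continuousAt]; exact fun x => (hFd x).continuousAt
    have hF0 : ∀ x, 0 ≤ x → Q₀ ≤ F x := by
      intro x hx
      exact le_add_of_nonneg_right (intervalIntegral.integral_nonneg hx fun u _ => hfnn u)
    have hFpos : ∀ x, 0 ≤ x → 0 < F x := fun x hx => lt_of_lt_of_le (by linarith) (hF0 x hx)
    -- F x ≤ exp x * Q x on [0, t]
    have hFle : ∀ x ∈ Icc (0:ℝ) t, F x ≤ Real.exp x * Q x := by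
      intro x hx
      have hxθ : x ∈ Ico (0:ℝ) θ := hsub hx
      have h1 := hQineq x hxθ
      have h2 : (∫ s in (0:ℝ)..x, Real.exp (-(x - s)) * Q s ^ p)
          = Real.exp (-x) * ∫ s in (0:ℝ)..x, f s := by
        rw [← intervalIntegral.integral_const_mul]
        apply intervalIntegral.integral_congr
        intro s hs
        rw [uIcc_of_le hx.1] at hs
        have hs' : s ∈ Icc (0:ℝ) t := ⟨hs.1, le_trans hs.2 hx.2⟩
        show Real.exp (-(x - s)) * Q s ^ p = Real.exp (-x) * f s
        rw [hfeq s hs', show -(x - s) = -x + s by ring, Real.exp_add]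
        ring
      rw [h2] at h1
      have h3 : Real.exp (-x) * F x ≤ Q x := by
        have hFx : F x = Q₀ + ∫ s in (0:ℝ)..x, f s := rfl
        rw [hFx]; linarith [h1]
      have h4 := mul_le_mul_of_nonneg_left h3 (Real.exp_pos x).le
      calc F x = Real.exp x * (Real.exp (-x) * F x) := by
            rw [← mul_assoc, ← Real.exp_add]; simp
        _ ≤ Real.exp x * Q x := h4
    -- lower bound on f
    have hflb : ∀ x ∈ Icc (0:ℝ) t, Real.exp ((1 - (p:ℝ)) * x) * F x ^ p ≤ f x := by
      intro x hx
      have hFx := hFpos x hx.1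
      have hqx : Real.exp (-x) * F x ≤ Q x := by
        have := hFle x hx
        have h4 := mul_le_mul_of_nonneg_left this (Real.exp_pos (-x)).le
        calc Real.exp (-x) * F x ≤ Real.exp (-x) * (Real.exp x * Q x) := h4
          _ = Q x := by rw [← mul_assoc, ← Real.exp_add]; simp
      have hqnn : 0 ≤ Real.exp (-x) * F x := by positivity
      have hpow : (Real.exp (-x) * F x) ^ p ≤ Q x ^ p := pow_le_pow_left₀ hqnn hqx p
      rw [hfeq x hx]
      calc Real.exp ((1 - (p:ℝ)) * x) * F x ^ p
          = Real.exp x * ((Real.exp (-x) * F x) ^ p) := by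
            rw [mul_pow, ← Real.exp_nat_mul, ← mul_assoc, ← Real.exp_add]
            congr 2
            push_cast
            ring
        _ ≤ Real.exp x * Q x ^ p := by
            exact mul_le_mul_of_nonneg_left hpow (Real.exp_pos x).le
    -- the comparison function G
    set G : ℝ → ℝ := fun x => (F x ^ (p - 1))⁻¹ - Real.exp ((1 - (p:ℝ)) * x) with hG
    have hcast : ((p - 1 : ℕ):ℝ) = (p:ℝ) - 1 := by
      push_cast [Nat.cast_sub (by omega : 1 ≤ p)]; ring
    have hGd : ∀ x, 0 ≤ x → HasDerivAt G
        (-(((p - 1 : ℕ):ℝ) * F x ^ (p - 1 - 1) * f x) / (F x ^ (p - 1)) ^ 2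
          - Real.exp ((1 - (p:ℝ)) * x) * (1 - (p:ℝ))) x := by
      intro x hx
      have hFx := hFpos x hx
      have hpow : HasDerivAt (fun y => F y ^ (p - 1))
          (((p - 1 : ℕ):ℝ) * F x ^ (p - 1 - 1) * f x) x := (hFd x).pow (p - 1)
      have hinv := hpow.inv (ne_of_gt (pow_pos hFx (p - 1)))
      have hlin : HasDerivAt (fun y : ℝ => (1 - (p:ℝ)) * y) (1 - (p:ℝ)) x := by
        simpa using (hasDerivAt_id x).const_mul (1 - (p:ℝ))
      exact hinv.sub hlin.exp
    have hGc : ContinuousOn G (Icc 0 t) := by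
      apply ContinuousOn.sub
      · exact ContinuousOn.inv₀ ((hFcont.continuousOn).pow _)
          fun x hx => ne_of_gt (pow_pos (hFpos x hx.1) _)
      · exact (Real.continuous_exp.comp (continuous_const.mul continuous_id)).continuousOn
    have hGanti : AntitoneOn G (Icc 0 t) := by
      apply antitoneOn_of_deriv_nonpos (convex_Icc 0 t) hGc
      · intro x hx
        rw [interior_Icc] at hx
        exact ((hGd x hx.1.le).differentiableAt).differentiableWithinAt
      · intro x hx
        rw [interior_Icc] at hx
        have hx' : x ∈ Icc (0:ℝ) t := ⟨hx.1.le, hx.2.le⟩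
        have hFx := hFpos x hx.1.le
        rw [(hGd x hx.1.le).deriv, hcast]
        set E := Real.exp ((1 - (p:ℝ)) * x) with hE
        have hEpos : 0 < E := Real.exp_pos _
        have hfl := hflb x hx'
        have hsq : (F x ^ (p - 1)) ^ 2 = F x ^ (p - 1 - 1) * F x ^ p := by
          rw [← pow_mul, ← pow_add]
          congr 1
          omega
        have hnum : E * ((p:ℝ) - 1) * (F x ^ (p - 1)) ^ 2
            ≤ ((p:ℝ) - 1) * F x ^ (p - 1 - 1) * f x := by
          rw [hsq]
          have h1 : 0 ≤ ((p:ℝ) - 1) * F x ^ (p - 1 - 1) :=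
            mul_nonneg (by linarith) (pow_nonneg hFx.le _)
          calc E * ((p:ℝ) - 1) * (F x ^ (p - 1 - 1) * F x ^ p)
              = ((p:ℝ) - 1) * F x ^ (p - 1 - 1) * (E * F x ^ p) := by ring
            _ ≤ ((p:ℝ) - 1) * F x ^ (p - 1 - 1) * f x := mul_le_mul_of_nonneg_left hfl h1
        have hden : (0:ℝ) < (F x ^ (p - 1)) ^ 2 := by positivity
        have hdiv : E * ((p:ℝ) - 1) ≤ ((p:ℝ) - 1) * F x ^ (p - 1 - 1) * f x
            / (F x ^ (p - 1)) ^ 2 := (le_div_iff₀ hden).mpr hnum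
        rw [neg_div]
        nlinarith [hdiv]
    have hGle : G t ≤ G 0 := hGanti (left_mem_Icc.mpr ht0) (right_mem_Icc.mpr ht0) ht0
    have hG0 : G 0 = (Q₀ ^ (p - 1))⁻¹ - 1 := by
      simp [hG, hF, intervalIntegral.integral_same]
    have hGt : (F t ^ (p - 1))⁻¹ - Real.exp ((1 - (p:ℝ)) * t) = G t := rfl
    have hFtpos : 0 < F t := hFpos t ht0
    have hinvpos : 0 < (F t ^ (p - 1))⁻¹ := by positivity
    have h1 : (F t ^ (p - 1))⁻¹ - Real.exp ((1 - (p:ℝ)) * t) ≤ (Q₀ ^ (p - 1))⁻¹ - 1 := by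
      rw [← hG0]; exact hGle
    have hexpgt : c < Real.exp ((1 - (p:ℝ)) * t) := by
      rw [hc, one_div]
      linarith
    have hloglt : Real.log c < (1 - (p:ℝ)) * t := by
      rw [← Real.log_exp ((1 - (p:ℝ)) * t)]
      exact Real.log_lt_log hc0 hexpgt
    have hgoal : t < -(1 / ((p:ℝ) - 1)) * Real.log c := by
      rw [show -(1 / ((p:ℝ) - 1)) * Real.log c = -Real.log c / ((p:ℝ) - 1) by ring,
        lt_div_iff₀ (by linarith : (0:ℝ) < (p:ℝ) - 1)]
      nlinarith [hloglt]
    exact hgoal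
  by_contra h
  push_neg at h
  exact absurd (key T ⟨hTpos.le, h⟩) (lt_irrefl T)
end
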